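/- arXiv:2302.03344 — 5 statements merged into one kernel-verified Lean document; each statement's English description precedes it below -/
import Mathlib

section
/- Let a < l < b. Let x = (x₁, x₂) and y = (y₁, y₂) be functions from [a,b] to ℝ² such that x₂, y₂ are continuously differentiable on all of [a,b] and x₁, y₁ are piecewise C¹ with respect to l. Define (𝒥x)(z) := P₁ x′(z) = (−x₂′(z), −x₁′(z)) for z ∈ [a,b] \ {l} (derivatives taken piecewise), and likewise 𝒥y. Then ∫_a^b [⟨(𝒥x)(z), y(z)⟩ + ⟨x(z), (𝒥y)(z)⟩] dz (the integral split at l) equals [x(b)ᵀ P₁ y(b) − x(a)ᵀ P₁ y(a)] + x₂(l)·(y₁(l⁺) − y₁(l⁻)) + y₂(l)·(x₁(l⁺) − x₁(l⁻)). In particular the differential operator 𝒥 is formally skew-symmetric. -/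
open Matrix

/-- The matrix `P₁ = [[0,-1],[-1,0]]`. -/
noncomputable def P1 : Matrix (Fin 2) (Fin 2) ℝ := !![0, -1; -1, 0]

open Set in
lemma part_ftc (a b c d : ℝ) (hac : a ≤ c) (hcd : c < d) (hdb : d ≤ b)
    (f1 f2 g1 g2 : ℝ → ℝ)
    (hf1 : ContDiffOn ℝ 1 f1 (Icc a b)) (hf2 : ContDiffOn ℝ 1 f2 (Icc a b))
    (hg1 : ContDiffOn ℝ 1 g1 (Icc c d)) (hg2 : ContDiffOn ℝ 1 g2 (Icc c d)) :
    (∫ z in c..d,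
      ((-(derivWithin f1 (Icc a b) z)) * g1 z
        + (-(derivWithin g2 (Icc c d) z)) * f2 z
        + g2 z * (-(derivWithin f2 (Icc a b) z))
        + f1 z * (-(derivWithin g1 (Icc c d) z))))
    = (f1 c * g1 c + g2 c * f2 c) - (f1 d * g1 d + g2 d * f2 d) := by
  have hab : a < b := lt_of_le_of_lt hac (lt_of_lt_of_le hcd hdb)
  have hsub : Icc c d ⊆ Icc a b := Icc_subset_Icc hac hdb
  set F : ℝ → ℝ := fun z => -(f1 z * g1 z + g2 z * f2 z) with hF
  set g : ℝ → ℝ := fun z =>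
      ((-(derivWithin f1 (Icc a b) z)) * g1 z
        + (-(derivWithin g2 (Icc c d) z)) * f2 z
        + g2 z * (-(derivWithin f2 (Icc a b) z))
        + f1 z * (-(derivWithin g1 (Icc c d) z))) with hg
  have hcont : ContinuousOn g (Icc c d) := by
    have c1 : ContinuousOn (derivWithin f1 (Icc a b)) (Icc a b) :=
      hf1.continuousOn_derivWithin (uniqueDiffOn_Icc hab) le_rfl
    have c2 : ContinuousOn (derivWithin f2 (Icc a b)) (Icc a b) :=
      hf2.continuousOn_derivWithin (uniqueDiffOn_Icc hab) le_rfl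
    have c3 : ContinuousOn (derivWithin g1 (Icc c d)) (Icc c d) :=
      hg1.continuousOn_derivWithin (uniqueDiffOn_Icc hcd) le_rfl
    have c4 : ContinuousOn (derivWithin g2 (Icc c d)) (Icc c d) :=
      hg2.continuousOn_derivWithin (uniqueDiffOn_Icc hcd) le_rfl
    exact ((((c1.mono hsub).neg.mul hg1.continuousOn).add
      (c4.neg.mul (hf2.continuousOn.mono hsub))).add
      (hg2.continuousOn.mul (c2.mono hsub).neg)).add
      ((hf1.continuousOn.mono hsub).mul c3.neg)
  have hint : IntervalIntegrable g MeasureTheory.volume c d :=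
    (hcont.mono (by rw [uIcc_of_le hcd.le])).intervalIntegrable
  have hFc : ContinuousOn F (Icc c d) :=
    (((hf1.continuousOn.mono hsub).mul hg1.continuousOn).add
      (hg2.continuousOn.mul (hf2.continuousOn.mono hsub))).neg
  have hderiv : ∀ z ∈ Ioo c d, HasDerivAt F (g z) z := by
    intro z hz
    have hzab : Icc a b ∈ nhds z :=
      Icc_mem_nhds (lt_of_le_of_lt hac hz.1) (lt_of_lt_of_le hz.2 hdb)
    have hzcd : Icc c d ∈ nhds z := Icc_mem_nhds hz.1 hz.2
    have d1 : HasDerivAt f1 (derivWithin f1 (Icc a b) z) z := by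
      rw [derivWithin_of_mem_nhds hzab]
      exact (((hf1.differentiableOn one_ne_zero) z (hsub (Ioo_subset_Icc_self hz))).differentiableAt
        hzab).hasDerivAt
    have d2 : HasDerivAt f2 (derivWithin f2 (Icc a b) z) z := by
      rw [derivWithin_of_mem_nhds hzab]
      exact (((hf2.differentiableOn one_ne_zero) z (hsub (Ioo_subset_Icc_self hz))).differentiableAt
        hzab).hasDerivAt
    have d3 : HasDerivAt g1 (derivWithin g1 (Icc c d) z) z := by
      rw [derivWithin_of_mem_nhds hzcd]
      exact (((hg1.differentiableOn one_ne_zero) z (Ioo_subset_Icc_self hz)).differentiableAt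
        hzcd).hasDerivAt
    have d4 : HasDerivAt g2 (derivWithin g2 (Icc c d) z) z := by
      rw [derivWithin_of_mem_nhds hzcd]
      exact (((hg2.differentiableOn one_ne_zero) z (Ioo_subset_Icc_self hz)).differentiableAt
        hzcd).hasDerivAt
    have := (((d1.mul d3).add (d4.mul d2))).neg
    refine this.congr_deriv ?_
    simp only [hg]; ring
  have := intervalIntegral.integral_eq_sub_of_hasDerivAt_of_le hcd.le hFc hderiv hint
  rw [this]; simp [hF]; ring


set_option linter.unnecessarySimpa false in
/-- Formal skew-symmetry of the differential operator
`𝒥x = P₁ x' = (-x₂', -x₁')` (derivatives taken piecewise with respect to the interface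
position `l`).  Here `x = (x₁,x₂)`, `y = (y₁,y₂)`: the second components are `C¹` on
`[a,b]` and the first components are piecewise `C¹` with respect to `l`, with `C¹`
extensions `x1m, y1m` on `[a,l]` and `x1p, y1p` on `[l,b]`. -/
theorem stmt1 (a l b : ℝ) (hal : a < l) (hlb : l < b)
    (x1 x2 y1 y2 x1m x1p y1m y1p : ℝ → ℝ)
    (hx2 : ContDiffOn ℝ 1 x2 (Set.Icc a b))
    (hy2 : ContDiffOn ℝ 1 y2 (Set.Icc a b))
    (hx1m : ContDiffOn ℝ 1 x1m (Set.Icc a l))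
    (hx1p : ContDiffOn ℝ 1 x1p (Set.Icc l b))
    (hy1m : ContDiffOn ℝ 1 y1m (Set.Icc a l))
    (hy1p : ContDiffOn ℝ 1 y1p (Set.Icc l b))
    (hx1em : ∀ z ∈ Set.Ico a l, x1 z = x1m z)
    (hx1ep : ∀ z ∈ Set.Ioc l b, x1 z = x1p z)
    (hy1em : ∀ z ∈ Set.Ico a l, y1 z = y1m z)
    (hy1ep : ∀ z ∈ Set.Ioc l b, y1 z = y1p z) :
    ((∫ z in a..l,
        ((-(derivWithin x2 (Set.Icc a b) z)) * y1 z
          + (-(derivWithin x1m (Set.Icc a l) z)) * y2 z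
          + x1 z * (-(derivWithin y2 (Set.Icc a b) z))
          + x2 z * (-(derivWithin y1m (Set.Icc a l) z))))
      + (∫ z in l..b,
        ((-(derivWithin x2 (Set.Icc a b) z)) * y1 z
          + (-(derivWithin x1p (Set.Icc l b) z)) * y2 z
          + x1 z * (-(derivWithin y2 (Set.Icc a b) z))
          + x2 z * (-(derivWithin y1p (Set.Icc l b) z)))))
    = (![x1 b, x2 b] ⬝ᵥ P1.mulVec ![y1 b, y2 b]
        - ![x1 a, x2 a] ⬝ᵥ P1.mulVec ![y1 a, y2 a])
      + x2 l * (y1p l - y1m l) + y2 l * (x1p l - x1m l) := by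
  have hne : ∀ᵐ z : ℝ, z ≠ l := by
    have h0 : MeasureTheory.volume ({l} : Set ℝ) = 0 := MeasureTheory.measure_singleton l
    exact MeasureTheory.ae_iff.mpr (by simpa using h0)
  have e1 : (∫ z in a..l,
        ((-(derivWithin x2 (Set.Icc a b) z)) * y1 z
          + (-(derivWithin x1m (Set.Icc a l) z)) * y2 z
          + x1 z * (-(derivWithin y2 (Set.Icc a b) z))
          + x2 z * (-(derivWithin y1m (Set.Icc a l) z))))
      = ∫ z in a..l,
        ((-(derivWithin x2 (Set.Icc a b) z)) * y1m z
          + (-(derivWithin x1m (Set.Icc a l) z)) * y2 z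
          + x1m z * (-(derivWithin y2 (Set.Icc a b) z))
          + x2 z * (-(derivWithin y1m (Set.Icc a l) z))) := by
    apply intervalIntegral.integral_congr_ae
    filter_upwards [hne] with z hz hzI
    rw [Set.uIoc_of_le hal.le] at hzI
    have hzm : z ∈ Set.Ico a l := ⟨hzI.1.le, lt_of_le_of_ne hzI.2 hz⟩
    rw [hx1em z hzm, hy1em z hzm]
  have e2 : (∫ z in l..b,
        ((-(derivWithin x2 (Set.Icc a b) z)) * y1 z
          + (-(derivWithin x1p (Set.Icc l b) z)) * y2 z
          + x1 z * (-(derivWithin y2 (Set.Icc a b) z))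
          + x2 z * (-(derivWithin y1p (Set.Icc l b) z))))
      = ∫ z in l..b,
        ((-(derivWithin x2 (Set.Icc a b) z)) * y1p z
          + (-(derivWithin x1p (Set.Icc l b) z)) * y2 z
          + x1p z * (-(derivWithin y2 (Set.Icc a b) z))
          + x2 z * (-(derivWithin y1p (Set.Icc l b) z))) := by
    apply intervalIntegral.integral_congr_ae
    filter_upwards with z hzI
    rw [Set.uIoc_of_le hlb.le] at hzI
    rw [hx1ep z hzI, hy1ep z hzI]
  rw [e1, e2,
    part_ftc a b a l le_rfl hal hlb.le x2 y2 y1m x1m hx2 hy2 hy1m hx1m,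
    part_ftc a b l b hal.le hlb le_rfl x2 y2 y1p x1p hx2 hy2 hy1p hx1p]
  have ha1 : x1 a = x1m a := hx1em a ⟨le_rfl, hal⟩
  have ha2 : y1 a = y1m a := hy1em a ⟨le_rfl, hal⟩
  have hb1 : x1 b = x1p b := hx1ep b ⟨hlb, le_rfl⟩
  have hb2 : y1 b = y1p b := hy1ep b ⟨hlb, le_rfl⟩
  simp [P1, Matrix.mulVec, dotProduct, Matrix.vecHead, Matrix.vecTail, Fin.sum_univ_two, ha1, ha2, hb1, hb2]
  ring
end

section
/- Let a < l < b. Let u = (u₁, u₂) and v = (v₁, v₂) be functions from [a,b] to ℝ² such that u₂, v₂ are continuously differentiable on [a,b] and u₁, v₁ are piecewise C¹ with respect to l. Define (𝒥u)(z) := P₁ u′(z) for z ∈ [a,b] \ {l} (derivatives taken piecewise), and likewise 𝒥v. Then ∫_a^b [⟨(𝒥u)(z), v(z)⟩ + ⟨u(z), (𝒥v)(z)⟩] dz = ⟨e_∂(v), f_∂(u)⟩ + ⟨e_∂(u), f_∂(v)⟩ − f_I(u) e_I(v) − f_I(v) e_I(u). -/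
open Matrix

/-- Boundary flow `f_∂(u) = (1/√2) P₁ (u(b) - u(a))`. -/
noncomputable def fbd (ua ub : Fin 2 → ℝ) : Fin 2 → ℝ :=
  (Real.sqrt 2)⁻¹ • P1.mulVec (ub - ua)

/-- Boundary effort `e_∂(u) = (1/√2) (u(b) + u(a))`. -/
noncomputable def ebd (ua ub : Fin 2 → ℝ) : Fin 2 → ℝ :=
  (Real.sqrt 2)⁻¹ • (ub + ua)

/-- FTC for the bracket on one subinterval `[a,b] ⊆ [A,B]`. -/
lemma key_ftc (A B a b : ℝ) (hAa : A ≤ a) (hab : a < b) (hbB : b ≤ B)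
    (p q f g : ℝ → ℝ)
    (hp : ContDiffOn ℝ 1 p (Set.Icc A B))
    (hq : ContDiffOn ℝ 1 q (Set.Icc A B))
    (hf : ContDiffOn ℝ 1 f (Set.Icc a b))
    (hg : ContDiffOn ℝ 1 g (Set.Icc a b)) :
    (∫ z in a..b,
      ((-(derivWithin p (Set.Icc A B) z)) * g z
        + (-(derivWithin f (Set.Icc a b) z)) * q z
        + f z * (-(derivWithin q (Set.Icc A B) z))
        + p z * (-(derivWithin g (Set.Icc a b) z))))
    = (p a * g a + f a * q a) - (p b * g b + f b * q b) := by
  have hAB : A < B := lt_of_le_of_lt hAa (lt_of_lt_of_le hab hbB)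
  have hsub : Set.Icc a b ⊆ Set.Icc A B := Set.Icc_subset_Icc hAa hbB
  set F : ℝ → ℝ := fun z => -(p z * g z + f z * q z) with hF
  set G : ℝ → ℝ := fun z =>
    (-(derivWithin p (Set.Icc A B) z)) * g z
      + (-(derivWithin f (Set.Icc a b) z)) * q z
      + f z * (-(derivWithin q (Set.Icc A B) z))
      + p z * (-(derivWithin g (Set.Icc a b) z)) with hG
  have hcont : ContinuousOn F (Set.Icc a b) := by
    apply ContinuousOn.neg
    exact (((hp.continuousOn.mono hsub).mul hg.continuousOn).add
      (hf.continuousOn.mul (hq.continuousOn.mono hsub)))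
  have hderiv : ∀ x ∈ Set.Ioo a b, HasDerivWithinAt F (G x) (Set.Ioi x) x := by
    intro x hx
    have hmem1 : Set.Icc a b ∈ nhds x := Icc_mem_nhds hx.1 hx.2
    have hmem2 : Set.Icc A B ∈ nhds x :=
      Icc_mem_nhds (lt_of_le_of_lt hAa hx.1) (lt_of_lt_of_le hx.2 hbB)
    have hxab : x ∈ Set.Icc a b := Set.mem_Icc.2 ⟨hx.1.le, hx.2.le⟩
    have hpd : DifferentiableAt ℝ p x :=
      ((hp.differentiableOn one_ne_zero) x (hsub hxab)).differentiableAt hmem2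
    have hqd : DifferentiableAt ℝ q x :=
      ((hq.differentiableOn one_ne_zero) x (hsub hxab)).differentiableAt hmem2
    have hfd : DifferentiableAt ℝ f x :=
      ((hf.differentiableOn one_ne_zero) x hxab).differentiableAt hmem1
    have hgd : DifferentiableAt ℝ g x :=
      ((hg.differentiableOn one_ne_zero) x hxab).differentiableAt hmem1
    have h : HasDerivAt F (G x) x := by
      have : HasDerivAt F _ x := (((hpd.hasDerivAt.mul hgd.hasDerivAt).add
        (hfd.hasDerivAt.mul hqd.hasDerivAt)).neg)
      convert this using 1
      rw [hG]
      simp only [derivWithin_of_mem_nhds hmem1, derivWithin_of_mem_nhds hmem2]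
      ring
    exact h.hasDerivWithinAt
  have hint : IntervalIntegrable G MeasureTheory.volume a b := by
    apply ContinuousOn.intervalIntegrable_of_Icc hab.le
    have hp' := (hp.continuousOn_derivWithin (uniqueDiffOn_Icc hAB) le_rfl).mono hsub
    have hq' := (hq.continuousOn_derivWithin (uniqueDiffOn_Icc hAB) le_rfl).mono hsub
    have hf' := hf.continuousOn_derivWithin (uniqueDiffOn_Icc hab) le_rfl
    have hg' := hg.continuousOn_derivWithin (uniqueDiffOn_Icc hab) le_rfl
    exact ((hp'.neg.mul hg.continuousOn).add
      (hf'.neg.mul (hq.continuousOn.mono hsub))).add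
      ((hf.continuousOn.mul hq'.neg).add ((hp.continuousOn.mono hsub).mul hg'.neg))
      |>.congr (fun z hz => by rw [hG]; simp only [Pi.add_apply, Pi.sub_apply, Pi.neg_apply, Pi.mul_apply]; ring)
  have := intervalIntegral.integral_eq_sub_of_hasDeriv_right_of_le hab.le hcont hderiv hint
  rw [this, hF]
  ring

/-- The skew-symmetry bracket of the operator `𝒥u = P₁ u'` (derivatives taken
piecewise with respect to the interface position `l`) expressed in terms of the boundary and
interface port variables.  Here `u = (u₁,u₂)`, `v = (v₁,v₂)`: the second components are `C¹`
on `[a,b]`, the first components are piecewise `C¹` with respect to `l` with `C¹` extensions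
`u1m, v1m` on `[a,l]` and `u1p, v1p` on `[l,b]`; `f_I(u) = u₂(l)`,
`e_I(u) = -(u₁(l⁺) - u₁(l⁻))`. -/
theorem stmt3 (a l b : ℝ) (hal : a < l) (hlb : l < b)
    (u1 u2 v1 v2 u1m u1p v1m v1p : ℝ → ℝ)
    (hu2 : ContDiffOn ℝ 1 u2 (Set.Icc a b))
    (hv2 : ContDiffOn ℝ 1 v2 (Set.Icc a b))
    (hu1m : ContDiffOn ℝ 1 u1m (Set.Icc a l))
    (hu1p : ContDiffOn ℝ 1 u1p (Set.Icc l b))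
    (hv1m : ContDiffOn ℝ 1 v1m (Set.Icc a l))
    (hv1p : ContDiffOn ℝ 1 v1p (Set.Icc l b))
    (hu1em : ∀ z ∈ Set.Ico a l, u1 z = u1m z)
    (hu1ep : ∀ z ∈ Set.Ioc l b, u1 z = u1p z)
    (hv1em : ∀ z ∈ Set.Ico a l, v1 z = v1m z)
    (hv1ep : ∀ z ∈ Set.Ioc l b, v1 z = v1p z) :
    ((∫ z in a..l,
        ((-(derivWithin u2 (Set.Icc a b) z)) * v1 z
          + (-(derivWithin u1m (Set.Icc a l) z)) * v2 z
          + u1 z * (-(derivWithin v2 (Set.Icc a b) z))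
          + u2 z * (-(derivWithin v1m (Set.Icc a l) z))))
      + (∫ z in l..b,
        ((-(derivWithin u2 (Set.Icc a b) z)) * v1 z
          + (-(derivWithin u1p (Set.Icc l b) z)) * v2 z
          + u1 z * (-(derivWithin v2 (Set.Icc a b) z))
          + u2 z * (-(derivWithin v1p (Set.Icc l b) z)))))
    = ebd ![v1 a, v2 a] ![v1 b, v2 b] ⬝ᵥ fbd ![u1 a, u2 a] ![u1 b, u2 b]
      + ebd ![u1 a, u2 a] ![u1 b, u2 b] ⬝ᵥ fbd ![v1 a, v2 a] ![v1 b, v2 b]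
      - u2 l * (-(v1p l - v1m l)) - v2 l * (-(u1p l - u1m l)) := by
  -- replace u1, v1 by their smooth extensions inside the integrals
  have hae : ∀ᵐ z ∂(MeasureTheory.volume : MeasureTheory.Measure ℝ), z ≠ l := by
    have hset : {z : ℝ | ¬ z ≠ l} = {l} := by ext z; simp
    rw [MeasureTheory.ae_iff, hset]; exact Real.volume_singleton
  have h1 : (∫ z in a..l,
        ((-(derivWithin u2 (Set.Icc a b) z)) * v1 z
          + (-(derivWithin u1m (Set.Icc a l) z)) * v2 z
          + u1 z * (-(derivWithin v2 (Set.Icc a b) z))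
          + u2 z * (-(derivWithin v1m (Set.Icc a l) z))))
      = (∫ z in a..l,
        ((-(derivWithin u2 (Set.Icc a b) z)) * v1m z
          + (-(derivWithin u1m (Set.Icc a l) z)) * v2 z
          + u1m z * (-(derivWithin v2 (Set.Icc a b) z))
          + u2 z * (-(derivWithin v1m (Set.Icc a l) z)))) := by
    apply intervalIntegral.integral_congr_ae
    filter_upwards [hae] with z hz hzI
    rw [Set.uIoc_of_le hal.le] at hzI
    have hz' : z ∈ Set.Ico a l := ⟨hzI.1.le, lt_of_le_of_ne hzI.2 hz⟩
    rw [hu1em z hz', hv1em z hz']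
  have h2 : (∫ z in l..b,
        ((-(derivWithin u2 (Set.Icc a b) z)) * v1 z
          + (-(derivWithin u1p (Set.Icc l b) z)) * v2 z
          + u1 z * (-(derivWithin v2 (Set.Icc a b) z))
          + u2 z * (-(derivWithin v1p (Set.Icc l b) z))))
      = (∫ z in l..b,
        ((-(derivWithin u2 (Set.Icc a b) z)) * v1p z
          + (-(derivWithin u1p (Set.Icc l b) z)) * v2 z
          + u1p z * (-(derivWithin v2 (Set.Icc a b) z))
          + u2 z * (-(derivWithin v1p (Set.Icc l b) z)))) := by
    apply intervalIntegral.integral_congr_ae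
    filter_upwards with z hzI
    rw [Set.uIoc_of_le hlb.le] at hzI
    rw [hu1ep z hzI, hv1ep z hzI]
  rw [h1, h2,
    key_ftc a b a l le_rfl hal hlb.le u2 v2 u1m v1m hu2 hv2 hu1m hv1m,
    key_ftc a b l b hal.le hlb le_rfl u2 v2 u1p v1p hu2 hv2 hu1p hv1p]
  have ea : u1m a = u1 a := (hu1em a ⟨le_rfl, hal⟩).symm
  have ea' : v1m a = v1 a := (hv1em a ⟨le_rfl, hal⟩).symm
  have eb : u1p b = u1 b := (hu1ep b ⟨hlb, le_rfl⟩).symm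
  have eb' : v1p b = v1 b := (hv1ep b ⟨hlb, le_rfl⟩).symm
  have hs2 : Real.sqrt 2 * Real.sqrt 2 = 2 := Real.mul_self_sqrt (by norm_num)
  have hs2' : (Real.sqrt 2)⁻¹ * (Real.sqrt 2)⁻¹ = (2 : ℝ)⁻¹ := by
    rw [← mul_inv, hs2]
  have e00 : (!![(0:ℝ), -1; -1, 0]) 0 0 = 0 := rfl
  have e01 : (!![(0:ℝ), -1; -1, 0]) 0 1 = -1 := rfl
  have e10 : (!![(0:ℝ), -1; -1, 0]) 1 0 = -1 := rfl
  have e11 : (!![(0:ℝ), -1; -1, 0]) 1 1 = 0 := rfl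
  have hsq : ((Real.sqrt 2)⁻¹ : ℝ) ^ 2 = 2⁻¹ := by rw [sq, hs2']
  simp only [ea, ea', eb, eb', ebd, fbd, P1, dotProduct, Matrix.mulVec,
    Fin.sum_univ_two, Pi.smul_apply, Pi.sub_apply, Pi.add_apply, smul_eq_mul,
    Matrix.cons_val_zero, Matrix.cons_val_one, Matrix.head_cons, e00, e01, e10, e11]
  ring_nf
  simp only [hsq]
  ring
end

section
/- Let a < l < b, T > 0, and let Q⁻, Q⁺ : [a,b] → ℝ^{2×2} be continuously differentiable with symmetric values. Let x : [0,T] × [a,b] → ℝ² be such that (t,z) ↦ x(t,z) is continuously differentiable on [0,T] × [a,l] and on [0,T] × [l,b] (with one-sided limits at z = l), and suppose that for every t ∈ [0,T]: (i) x satisfies the conservation law ∂x/∂t(t,z) = P₁ ∂/∂z (Q_l x)(t,z) for all z ∈ [a,l) ∪ (l,b], and (ii) the second component of u(t) := Q_l(·) x(t,·) is continuous at z = l, i.e. (Q⁻x)₂(t,l⁻) = (Q⁺x)₂(t,l⁺). Then for all t ∈ [0,T]: d/dt ‖x(t,·)‖_{Q_l}² = ⟨e_∂(u(t)), f_∂(u(t))⟩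 − e_I(u(t)) f_I(u(t)). That is, the change of the Hamiltonian H(x(t)) = ‖x(t)‖_{Q_l}² equals the power flow at the boundary and at the interface. -/
open Matrix

open Set MeasureTheory intervalIntegral

lemma P1_symm : P1.IsSymm := by
  unfold Matrix.IsSymm
  ext i j
  fin_cases i <;> fin_cases j <;> simp [P1]

lemma quadDeriv (A : Matrix (Fin 2) (Fin 2) ℝ) (hA : A.IsSymm)
    {f : ℝ → Fin 2 → ℝ} {v : Fin 2 → ℝ} {s : Set ℝ} {t : ℝ}
    (hf : HasDerivWithinAt f v s t) :
    HasDerivWithinAt (fun τ => f τ ⬝ᵥ A.mulVec (f τ)) (2 * (A.mulVec (f t) ⬝ᵥ v)) s t := by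
  have hf0 := (hasDerivWithinAt_pi.1 hf) 0
  have hf1 := (hasDerivWithinAt_pi.1 hf) 1
  have hA10 : A 1 0 = A 0 1 := by
    have h := congrFun (congrFun hA 0) 1
    simpa [Matrix.transpose_apply] using h
  have H : HasDerivWithinAt
      (fun τ => f τ 0 * (A 0 0 * f τ 0 + A 0 1 * f τ 1)
        + f τ 1 * (A 1 0 * f τ 0 + A 1 1 * f τ 1))
      (v 0 * (A 0 0 * f t 0 + A 0 1 * f t 1) + f t 0 * (A 0 0 * v 0 + A 0 1 * v 1)
        + (v 1 * (A 1 0 * f t 0 + A 1 1 * f t 1) + f t 1 * (A 1 0 * v 0 + A 1 1 * v 1))) s t :=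
    (hf0.mul ((hf0.const_mul _).add (hf1.const_mul _))).add
      (hf1.mul ((hf0.const_mul _).add (hf1.const_mul _)))
  have hfun : (fun τ => f τ ⬝ᵥ A.mulVec (f τ))
      = (fun τ => f τ 0 * (A 0 0 * f τ 0 + A 0 1 * f τ 1)
        + f τ 1 * (A 1 0 * f τ 0 + A 1 1 * f τ 1)) := by
    funext τ; simp [dotProduct, Matrix.mulVec, Fin.sum_univ_two]
  rw [hfun]
  convert H using 1
  simp only [dotProduct, Matrix.mulVec, Fin.sum_univ_two]
  rw [hA10]; ring

lemma contOn_quad (A : Matrix (Fin 2) (Fin 2) ℝ) {g : ℝ → Fin 2 → ℝ} {s : Set ℝ}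
    (h : ContinuousOn g s) : ContinuousOn (fun ζ => g ζ ⬝ᵥ A.mulVec (g ζ)) s := by
  have hfun : (fun ζ => g ζ ⬝ᵥ A.mulVec (g ζ)) = fun ζ =>
      g ζ 0 * (A 0 0 * g ζ 0 + A 0 1 * g ζ 1) + g ζ 1 * (A 1 0 * g ζ 0 + A 1 1 * g ζ 1) := by
    funext ζ; simp [dotProduct, Matrix.mulVec, Fin.sum_univ_two]
  rw [hfun]
  have h0 : ContinuousOn (fun ζ => g ζ 0) s := (continuous_apply 0).comp_continuousOn h
  have h1 : ContinuousOn (fun ζ => g ζ 1) s := (continuous_apply 1).comp_continuousOn h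
  exact (h0.mul ((continuousOn_const.mul h0).add (continuousOn_const.mul h1))).add
    (h1.mul ((continuousOn_const.mul h0).add (continuousOn_const.mul h1)))

lemma contOn_quadVar {I : Set ℝ} (Q : ℝ → Matrix (Fin 2) (Fin 2) ℝ)
    (hQ : ∀ i j, ContinuousOn (fun z => Q z i j) I) {g : ℝ → Fin 2 → ℝ}
    (hg : ContinuousOn g I) :
    ContinuousOn (fun z => g z ⬝ᵥ (Q z).mulVec (g z)) I := by
  have h0 : ContinuousOn (fun z => g z 0) I := (continuous_apply 0).comp_continuousOn hg
  have h1 : ContinuousOn (fun z => g z 1) I := (continuous_apply 1).comp_continuousOn hg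
  have hfun : (fun z => g z ⬝ᵥ (Q z).mulVec (g z)) = fun z =>
      g z 0 * (Q z 0 0 * g z 0 + Q z 0 1 * g z 1)
        + g z 1 * (Q z 1 0 * g z 0 + Q z 1 1 * g z 1) := by
    funext z; simp [dotProduct, Matrix.mulVec, Fin.sum_univ_two]
  rw [hfun]
  exact (h0.mul (((hQ 0 0).mul h0).add ((hQ 0 1).mul h1))).add
    (h1.mul (((hQ 1 0).mul h0).add ((hQ 1 1).mul h1)))

lemma sideDeriv (α β T : ℝ) (hab : α < β) (hT : 0 < T)
    (Q : ℝ → Matrix (Fin 2) (Fin 2) ℝ)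
    (hQ : ∀ i j, ContDiffOn ℝ 1 (fun z => Q z i j) (Set.Icc α β))
    (hQs : ∀ z ∈ Set.Icc α β, (Q z).IsSymm)
    (y : ℝ → ℝ → Fin 2 → ℝ)
    (hy : ContDiffOn ℝ 1 (fun p : ℝ × ℝ => y p.1 p.2) (Set.Icc 0 T ×ˢ Set.Icc α β))
    (hpde : ∀ t ∈ Set.Icc (0:ℝ) T, ∀ z ∈ Set.Ioo α β, ∃ w : Fin 2 → ℝ,
      HasDerivWithinAt (fun ζ => (Q ζ).mulVec (y t ζ)) w (Set.Icc α β) z ∧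
      HasDerivWithinAt (fun s => y s z) (P1.mulVec w) (Set.Icc 0 T) t) :
    ∀ t ∈ Set.Icc (0:ℝ) T,
      HasDerivWithinAt (fun s => ∫ z in α..β, y s z ⬝ᵥ (Q z).mulVec (y s z))
        ((Q β).mulVec (y t β) ⬝ᵥ P1.mulVec ((Q β).mulVec (y t β))
          - (Q α).mulVec (y t α) ⬝ᵥ P1.mulVec ((Q α).mulVec (y t α)))
        (Set.Icc 0 T) t := by
  set S : Set (ℝ × ℝ) := Set.Icc (0:ℝ) T ×ˢ Set.Icc α β with hSdef
  set U : ℝ × ℝ → Fin 2 → ℝ := fun p => (Q p.2).mulVec (y p.1 p.2) with hUdef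
  have hS : UniqueDiffOn ℝ S := (uniqueDiffOn_Icc hT).prod (uniqueDiffOn_Icc hab)
  have hScompact : IsCompact S := isCompact_Icc.prod isCompact_Icc
  -- components of y are C¹ on S
  have hyj : ∀ j, ContDiffOn ℝ 1 (fun p : ℝ × ℝ => y p.1 p.2 j) S := by
    intro j
    exact (ContinuousLinearMap.proj j : (Fin 2 → ℝ) →L[ℝ] ℝ).contDiff.comp_contDiffOn hy
  have hQij : ∀ i j, ContDiffOn ℝ 1 (fun p : ℝ × ℝ => Q p.2 i j) S := by
    intro i j
    exact (hQ i j).comp contDiff_snd.contDiffOn (fun p hp => hp.2)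
  have hUc1 : ContDiffOn ℝ 1 U S := by
    apply contDiffOn_pi.2
    intro i
    have hfun : (fun p : ℝ × ℝ => U p i)
        = fun p => Q p.2 i 0 * y p.1 p.2 0 + Q p.2 i 1 * y p.1 p.2 1 := by
      funext p; simp only [hUdef, Matrix.mulVec, dotProduct, Fin.sum_univ_two]
    rw [hfun]
    exact ((hQij i 0).mul (hyj 0)).add ((hQij i 1).mul (hyj 1))
  set W : ℝ × ℝ → Fin 2 → ℝ := fun p => fderivWithin ℝ U S p ((0:ℝ), (1:ℝ)) with hWdef
  have hWcont : ContinuousOn W S := by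
    have h := hUc1.continuousOn_fderivWithin hS le_rfl
    exact h.clm_apply continuousOn_const
  have hUcont : ContinuousOn U S := hUc1.continuousOn
  -- slice derivative in z
  have hslice : ∀ t ∈ Set.Icc (0:ℝ) T, ∀ z ∈ Set.Icc α β,
      HasDerivWithinAt (fun ζ => U (t, ζ)) (W (t, z)) (Set.Icc α β) z := by
    intro t ht z hz
    have hmem : (t, z) ∈ S := ⟨ht, hz⟩
    have hd : HasFDerivWithinAt U (fderivWithin ℝ U S (t, z)) S (t, z) :=
      ((hUc1.differentiableOn one_ne_zero) _ hmem).hasFDerivWithinAt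
    have hin : HasDerivWithinAt (fun ζ : ℝ => ((t, ζ) : ℝ × ℝ)) ((0:ℝ), (1:ℝ))
        (Set.Icc α β) z :=
      HasDerivWithinAt.prodMk (hasDerivWithinAt_const _ _ t) (hasDerivWithinAt_id _ _)
    exact hd.comp_hasDerivWithinAt z hin (fun ζ hζ => ⟨ht, hζ⟩)
  -- G : the common derivative
  set G : ℝ × ℝ → ℝ := fun p => 2 * (U p ⬝ᵥ P1.mulVec (W p)) with hGdef
  have hGcont : ContinuousOn G S := by
    have hfun : G = fun p =>
        2 * (U p 0 * (P1 0 0 * W p 0 + P1 0 1 * W p 1)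
          + U p 1 * (P1 1 0 * W p 0 + P1 1 1 * W p 1)) := by
      funext p; simp [hGdef, dotProduct, Matrix.mulVec, Fin.sum_univ_two]
    rw [hfun]
    have hU0 : ContinuousOn (fun p => U p 0) S := (continuous_apply 0).comp_continuousOn hUcont
    have hU1 : ContinuousOn (fun p => U p 1) S := (continuous_apply 1).comp_continuousOn hUcont
    have hW0 : ContinuousOn (fun p => W p 0) S := (continuous_apply 0).comp_continuousOn hWcont
    have hW1 : ContinuousOn (fun p => W p 1) S := (continuous_apply 1).comp_continuousOn hWcont
    exact continuousOn_const.mul ((hU0.mul ((continuousOn_const.mul hW0).add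
      (continuousOn_const.mul hW1))).add
      (hU1.mul ((continuousOn_const.mul hW0).add (continuousOn_const.mul hW1))))
  -- time derivative of the integrand
  have hFt : ∀ t ∈ Set.Icc (0:ℝ) T, ∀ z ∈ Set.Ioo α β,
      HasDerivWithinAt (fun s => y s z ⬝ᵥ (Q z).mulVec (y s z)) (G (t, z))
        (Set.Icc 0 T) t := by
    intro t ht z hz
    obtain ⟨w, hw1, hw2⟩ := hpde t ht z hz
    have hzI : z ∈ Set.Icc α β := ⟨hz.1.le, hz.2.le⟩
    have hweq : w = W (t, z) := by
      have h1 := hw1.derivWithin ((uniqueDiffOn_Icc hab) z hzI)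
      have h2 := (hslice t ht z hzI).derivWithin ((uniqueDiffOn_Icc hab) z hzI)
      rw [← h1, ← h2]
    have hq := quadDeriv (Q z) (hQs z hzI) hw2
    rw [hweq] at hq
    exact hq
  -- z-derivative of V
  have hVz : ∀ t ∈ Set.Icc (0:ℝ) T, ∀ z ∈ Set.Icc α β,
      HasDerivWithinAt (fun ζ => U (t, ζ) ⬝ᵥ P1.mulVec (U (t, ζ))) (G (t, z))
        (Set.Icc α β) z := by
    intro t ht z hz
    have hq := quadDeriv P1 P1_symm (hslice t ht z hz)
    convert hq using 1
    have h10 : P1 1 0 = P1 0 1 := by simp [P1]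
    simp only [hGdef, dotProduct, Matrix.mulVec, Fin.sum_univ_two]
    rw [h10]; ring
  -- slice continuity
  have hUz : ∀ s ∈ Set.Icc (0:ℝ) T, ContinuousOn (fun ζ => U (s, ζ)) (Set.Icc α β) := by
    intro s hs
    exact hUcont.comp (Continuous.prodMk_right s).continuousOn (fun ζ hζ => ⟨hs, hζ⟩)
  have hGz_cont : ∀ s ∈ Set.Icc (0:ℝ) T, ContinuousOn (fun z => G (s, z)) (Set.Icc α β) := by
    intro s hs
    exact hGcont.comp (Continuous.prodMk_right s).continuousOn (fun z hz => ⟨hs, hz⟩)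
  have hGs_cont : ∀ z ∈ Set.Icc α β, ContinuousOn (fun s => G (s, z)) (Set.Icc (0:ℝ) T) := by
    intro z hz
    exact hGcont.comp (continuous_id.prodMk continuous_const).continuousOn (fun s hs => ⟨hs, hz⟩)
  have hyz_cont : ∀ z ∈ Set.Icc α β, ContinuousOn (fun s => y s z) (Set.Icc (0:ℝ) T) := by
    intro z hz
    exact hy.continuousOn.comp (continuous_id.prodMk continuous_const).continuousOn
      (fun s hs => ⟨hs, hz⟩)
  have hGint : ∀ s ∈ Set.Icc (0:ℝ) T, IntervalIntegrable (fun z => G (s, z)) volume α β := by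
    intro s hs
    apply ContinuousOn.intervalIntegrable
    rw [Set.uIcc_of_le hab.le]
    exact hGz_cont s hs
  obtain ⟨C, hC⟩ := hScompact.exists_bound_of_continuousOn hGcont
  set D : ℝ → ℝ := fun s => ∫ z in α..β, G (s, z) with hDdef
  have hDcont : ContinuousOn D (Set.Icc (0:ℝ) T) := by
    intro s hs
    apply intervalIntegral.continuousWithinAt_of_dominated_interval (bound := fun _ => C)
    · filter_upwards [self_mem_nhdsWithin] with σ hσ
      have h1 : ContinuousOn (fun z => G (σ, z)) (Set.uIoc α β) := by
        rw [Set.uIoc_of_le hab.le]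
        exact (hGz_cont σ hσ).mono Set.Ioc_subset_Icc_self
      exact h1.aestronglyMeasurable measurableSet_uIoc
    · filter_upwards [self_mem_nhdsWithin] with σ hσ
      apply Filter.Eventually.of_forall
      intro z hz
      rw [Set.uIoc_of_le hab.le] at hz
      exact hC (σ, z) ⟨hσ, Set.Ioc_subset_Icc_self hz⟩
    · exact intervalIntegrable_const
    · apply Filter.Eventually.of_forall
      intro z hz
      rw [Set.uIoc_of_le hab.le] at hz
      exact hGs_cont z (Set.Ioc_subset_Icc_self hz) s hs
  -- FTC in z
  have hVval : ∀ s ∈ Set.Icc (0:ℝ) T, D s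
      = U (s, β) ⬝ᵥ P1.mulVec (U (s, β)) - U (s, α) ⬝ᵥ P1.mulVec (U (s, α)) := by
    intro s hs
    apply intervalIntegral.integral_eq_sub_of_hasDeriv_right_of_le hab.le
    · exact contOn_quad P1 (hUz s hs)
    · intro z hz
      exact ((hVz s hs z ⟨hz.1.le, hz.2.le⟩).hasDerivAt
        (Icc_mem_nhds hz.1 hz.2)).hasDerivWithinAt
    · exact hGint s hs
  -- FTC in t
  have hFTCt : ∀ s ∈ Set.Icc (0:ℝ) T, ∀ z ∈ Set.Ioo α β,
      (∫ σ in (0:ℝ)..s, G (σ, z))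
        = y s z ⬝ᵥ (Q z).mulVec (y s z) - y 0 z ⬝ᵥ (Q z).mulVec (y 0 z) := by
    intro s hs z hz
    have hzI : z ∈ Set.Icc α β := ⟨hz.1.le, hz.2.le⟩
    apply intervalIntegral.integral_eq_sub_of_hasDeriv_right_of_le hs.1
    · exact (contOn_quad (Q z) (hyz_cont z hzI)).mono (Set.Icc_subset_Icc le_rfl hs.2)
    · intro σ hσ
      have hσT : σ ∈ Set.Ioo (0:ℝ) T := ⟨hσ.1, lt_of_lt_of_le hσ.2 hs.2⟩
      exact ((hFt σ ⟨hσT.1.le, hσT.2.le⟩ z hz).hasDerivAt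
        (Icc_mem_nhds hσT.1 hσT.2)).hasDerivWithinAt
    · apply ContinuousOn.intervalIntegrable
      rw [Set.uIcc_of_le hs.1]
      exact (hGs_cont z hzI).mono (Set.Icc_subset_Icc le_rfl hs.2)
  -- Fubini
  have hswap : ∀ s ∈ Set.Icc (0:ℝ) T,
      (∫ z in α..β, (∫ σ in (0:ℝ)..s, G (σ, z))) = ∫ σ in (0:ℝ)..s, D σ := by
    intro s hs
    rw [hDdef]
    simp_rw [intervalIntegral.integral_of_le hab.le, intervalIntegral.integral_of_le hs.1]
    have hint : Integrable (fun p : ℝ × ℝ => G p)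
        ((volume.restrict (Set.Ioc (0:ℝ) s)).prod (volume.restrict (Set.Ioc α β))) := by
      rw [Measure.prod_restrict, ← Measure.volume_eq_prod]
      apply (hGcont.integrableOn_compact hScompact).mono_set
      exact Set.prod_mono (Set.Ioc_subset_Icc_self.trans (Set.Icc_subset_Icc le_rfl hs.2))
        Set.Ioc_subset_Icc_self
    exact (MeasureTheory.integral_integral_swap hint).symm
  -- the key identity
  have hFint : ∀ s ∈ Set.Icc (0:ℝ) T,
      IntervalIntegrable (fun z => y s z ⬝ᵥ (Q z).mulVec (y s z)) volume α β := by
    intro s hs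
    apply ContinuousOn.intervalIntegrable
    rw [Set.uIcc_of_le hab.le]
    have hyc : ContinuousOn (fun z => y s z) (Set.Icc α β) :=
      hy.continuousOn.comp (Continuous.prodMk_right s).continuousOn (fun z hz => ⟨hs, hz⟩)
    have h0 : ContinuousOn (fun z => y s z 0) (Set.Icc α β) :=
      (continuous_apply 0).comp_continuousOn hyc
    have h1 : ContinuousOn (fun z => y s z 1) (Set.Icc α β) :=
      (continuous_apply 1).comp_continuousOn hyc
    have hfun : (fun z => y s z ⬝ᵥ (Q z).mulVec (y s z)) = fun z =>
        y s z 0 * (Q z 0 0 * y s z 0 + Q z 0 1 * y s z 1)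
          + y s z 1 * (Q z 1 0 * y s z 0 + Q z 1 1 * y s z 1) := by
      funext z; simp [dotProduct, Matrix.mulVec, Fin.sum_univ_two]
    rw [hfun]
    exact (h0.mul (((hQ 0 0).continuousOn.mul h0).add ((hQ 0 1).continuousOn.mul h1))).add
      (h1.mul (((hQ 1 0).continuousOn.mul h0).add ((hQ 1 1).continuousOn.mul h1)))
  have h0T : (0:ℝ) ∈ Set.Icc (0:ℝ) T := ⟨le_refl 0, hT.le⟩
  have hkey : ∀ s ∈ Set.Icc (0:ℝ) T,
      (∫ z in α..β, y s z ⬝ᵥ (Q z).mulVec (y s z))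
        = (∫ z in α..β, y 0 z ⬝ᵥ (Q z).mulVec (y 0 z)) + ∫ σ in (0:ℝ)..s, D σ := by
    intro s hs
    have hae : ∀ᵐ z : ℝ, z ∈ Set.uIoc α β →
        (∫ σ in (0:ℝ)..s, G (σ, z))
          = y s z ⬝ᵥ (Q z).mulVec (y s z) - y 0 z ⬝ᵥ (Q z).mulVec (y 0 z) := by
      have hβ : ∀ᵐ z : ℝ, z ≠ β := by
        rw [MeasureTheory.ae_iff]
        simpa using Real.volume_singleton
      filter_upwards [hβ] with z hzβ hz
      rw [Set.uIoc_of_le hab.le] at hz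
      exact hFTCt s hs z ⟨hz.1, lt_of_le_of_ne hz.2 hzβ⟩
    have h1 : (∫ z in α..β, (∫ σ in (0:ℝ)..s, G (σ, z)))
        = ∫ z in α..β, (y s z ⬝ᵥ (Q z).mulVec (y s z) - y 0 z ⬝ᵥ (Q z).mulVec (y 0 z)) :=
      intervalIntegral.integral_congr_ae hae
    rw [← hswap s hs, h1, intervalIntegral.integral_sub (hFint s hs) (hFint 0 h0T)]
    ring
  -- primitive derivative
  intro t ht
  have hprim : HasDerivWithinAt (fun s => ∫ σ in (0:ℝ)..s, D σ) (D t) (Set.Icc (0:ℝ) T) t := by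
    haveI : Fact (t ∈ Set.Icc (0:ℝ) T) := ⟨ht⟩
    apply intervalIntegral.integral_hasDerivWithinAt_right
    · apply ContinuousOn.intervalIntegrable
      exact hDcont.mono (Set.uIcc_subset_Icc h0T ht)
    · exact ⟨Set.Icc (0:ℝ) T, self_mem_nhdsWithin,
        hDcont.aestronglyMeasurable measurableSet_Icc⟩
    · exact hDcont t ht
  have hfinal := (hprim.const_add (∫ z in α..β, y 0 z ⬝ᵥ (Q z).mulVec (y 0 z))).congr
    (fun s hs => hkey s hs) (hkey t ht)
  rw [hVval t ht] at hfinal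
  exact hfinal

/-- power balance equation.  Let `a < l < b`, `T > 0`, and let
`Q⁻, Q⁺ : [a,b] → ℝ^{2×2}` be `C¹` (entrywise) with symmetric values.  Let `x(t,z)` be given
on `[0,T] × ([a,l) ∪ (l,b])` by functions `xm`, `xp` that are `C¹` on `[0,T] × [a,l]` and
`[0,T] × [l,b]` respectively (so `x` has one-sided limits at `z = l`).  Suppose that
(i) `x` satisfies the conservation law `∂x/∂t = P₁ ∂/∂z (Q_l x)` on `[a,l) ∪ (l,b]`
(derivatives taken within the respective domains), and (ii) the second component of
`u(t) = Q_l(·) x(t,·)` is continuous at `z = l`.  Then for every `t ∈ [0,T]` the derivative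
of `t ↦ ‖x(t,·)‖_{Q_l}² = (1/2)∫_a^b x(t,z)ᵀ Q_l(z) x(t,z) dz` (within `[0,T]`) equals
`⟨e_∂(u(t)), f_∂(u(t))⟩ − e_I(u(t)) f_I(u(t))`, where `f_I(u(t)) = (Q⁺x)₂(t,l⁺)` and
`e_I(u(t)) = -((Q⁺x)₁(t,l⁺) - (Q⁻x)₁(t,l⁻))`. -/
theorem stmt4 (a l b T : ℝ) (hal : a < l) (hlb : l < b) (hT : 0 < T)
    (Qm Qp : ℝ → Matrix (Fin 2) (Fin 2) ℝ)
    (hQm : ∀ i j, ContDiffOn ℝ 1 (fun z => Qm z i j) (Set.Icc a b))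
    (hQp : ∀ i j, ContDiffOn ℝ 1 (fun z => Qp z i j) (Set.Icc a b))
    (hQsym : ∀ z ∈ Set.Icc a b, (Qm z).IsSymm ∧ (Qp z).IsSymm)
    (x xm xp : ℝ → ℝ → Fin 2 → ℝ)
    (hxm : ContDiffOn ℝ 1 (fun p : ℝ × ℝ => xm p.1 p.2) (Set.Icc 0 T ×ˢ Set.Icc a l))
    (hxp : ContDiffOn ℝ 1 (fun p : ℝ × ℝ => xp p.1 p.2) (Set.Icc 0 T ×ˢ Set.Icc l b))
    (hxem : ∀ t ∈ Set.Icc (0:ℝ) T, ∀ z ∈ Set.Ico a l, x t z = xm t z)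
    (hxep : ∀ t ∈ Set.Icc (0:ℝ) T, ∀ z ∈ Set.Ioc l b, x t z = xp t z)
    -- (i) the conservation law `∂x/∂t = P₁ ∂/∂z (Q_l x)` on `[a,l)` and on `(l,b]`:
    (hpdem : ∀ t ∈ Set.Icc (0:ℝ) T, ∀ z ∈ Set.Ico a l, ∃ w : Fin 2 → ℝ,
      HasDerivWithinAt (fun ζ => (Qm ζ).mulVec (xm t ζ)) w (Set.Icc a l) z ∧
      HasDerivWithinAt (fun s => xm s z) (P1.mulVec w) (Set.Icc 0 T) t)
    (hpdep : ∀ t ∈ Set.Icc (0:ℝ) T, ∀ z ∈ Set.Ioc l b, ∃ w : Fin 2 → ℝ,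
      HasDerivWithinAt (fun ζ => (Qp ζ).mulVec (xp t ζ)) w (Set.Icc l b) z ∧
      HasDerivWithinAt (fun s => xp s z) (P1.mulVec w) (Set.Icc 0 T) t)
    -- (ii) continuity of the second component of `u(t) = Q_l x(t,·)` at the interface:
    (hcont : ∀ t ∈ Set.Icc (0:ℝ) T,
      ((Qm l).mulVec (xm t l)) 1 = ((Qp l).mulVec (xp t l)) 1) :
    ∀ t ∈ Set.Icc (0:ℝ) T,
      HasDerivWithinAt
        (fun s => (1/2) * ∫ z in a..b,
          x s z ⬝ᵥ ((if z < l then Qm z else Qp z)).mulVec (x s z))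
        (ebd ((Qm a).mulVec (xm t a)) ((Qp b).mulVec (xp t b)) ⬝ᵥ
            fbd ((Qm a).mulVec (xm t a)) ((Qp b).mulVec (xp t b))
          - (-(((Qp l).mulVec (xp t l)) 0 - ((Qm l).mulVec (xm t l)) 0))
              * (((Qp l).mulVec (xp t l)) 1))
        (Set.Icc 0 T) t := by
  intro t ht
  have hm := sideDeriv a l T hal hT Qm
    (fun i j => (hQm i j).mono (Set.Icc_subset_Icc le_rfl hlb.le))
    (fun z hz => (hQsym z ⟨hz.1, hz.2.trans hlb.le⟩).1) xm hxm
    (fun t' ht' z hz => hpdem t' ht' z ⟨hz.1.le, hz.2⟩) t ht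
  have hp := sideDeriv l b T hlb hT Qp
    (fun i j => (hQp i j).mono (Set.Icc_subset_Icc hal.le le_rfl))
    (fun z hz => (hQsym z ⟨hal.le.trans hz.1, hz.2⟩).2) xp hxp
    (fun t' ht' z hz => hpdep t' ht' z ⟨hz.1, hz.2.le⟩) t ht
  have hsum := (hm.add hp).const_mul (1/2 : ℝ)
  -- the integrand identity
  have heq : ∀ s ∈ Set.Icc (0:ℝ) T,
      (1/2) * (∫ z in a..b, x s z ⬝ᵥ ((if z < l then Qm z else Qp z)).mulVec (x s z))
        = (1/2) * ((∫ z in a..l, xm s z ⬝ᵥ (Qm z).mulVec (xm s z))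
            + ∫ z in l..b, xp s z ⬝ᵥ (Qp z).mulVec (xp s z)) := by
    intro s hs
    have hxmc : ContinuousOn (fun z => xm s z) (Set.Icc a l) :=
      hxm.continuousOn.comp (Continuous.prodMk_right s).continuousOn (fun z hz => ⟨hs, hz⟩)
    have hxpc : ContinuousOn (fun z => xp s z) (Set.Icc l b) :=
      hxp.continuousOn.comp (Continuous.prodMk_right s).continuousOn (fun z hz => ⟨hs, hz⟩)
    have hFmc : ContinuousOn (fun z => xm s z ⬝ᵥ (Qm z).mulVec (xm s z)) (Set.Icc a l) :=
      contOn_quadVar Qm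
        (fun i j => ((hQm i j).mono (Set.Icc_subset_Icc le_rfl hlb.le)).continuousOn) hxmc
    have hFpc : ContinuousOn (fun z => xp s z ⬝ᵥ (Qp z).mulVec (xp s z)) (Set.Icc l b) :=
      contOn_quadVar Qp
        (fun i j => ((hQp i j).mono (Set.Icc_subset_Icc hal.le le_rfl)).continuousOn) hxpc
    have haem : ∀ᵐ z : ℝ, z ∈ Set.Ioc a l →
        x s z ⬝ᵥ ((if z < l then Qm z else Qp z)).mulVec (x s z)
          = xm s z ⬝ᵥ (Qm z).mulVec (xm s z) := by
      have hl : ∀ᵐ z : ℝ, z ≠ l := by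
        rw [MeasureTheory.ae_iff]; simpa using Real.volume_singleton
      filter_upwards [hl] with z hzl hz
      have hzo : z ∈ Set.Ico a l := ⟨hz.1.le, lt_of_le_of_ne hz.2 hzl⟩
      rw [hxem s hs z hzo, if_pos hzo.2]
    have haep : ∀ z ∈ Set.Ioc l b,
        x s z ⬝ᵥ ((if z < l then Qm z else Qp z)).mulVec (x s z)
          = xp s z ⬝ᵥ (Qp z).mulVec (xp s z) := by
      intro z hz
      rw [hxep s hs z hz, if_neg (not_lt.2 hz.1.le)]
    -- interval integrability of the original integrand on the two pieces
    have hIm : IntervalIntegrable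
        (fun z => x s z ⬝ᵥ ((if z < l then Qm z else Qp z)).mulVec (x s z)) volume a l := by
      rw [intervalIntegrable_iff_integrableOn_Ioc_of_le hal.le]
      apply MeasureTheory.Integrable.congr
        ((hFmc.integrableOn_compact isCompact_Icc).mono_set Set.Ioc_subset_Icc_self)
      rw [Filter.EventuallyEq, MeasureTheory.ae_restrict_iff' measurableSet_Ioc]
      filter_upwards [haem] with z hz hz'
      exact (hz hz').symm
    have hIp : IntervalIntegrable
        (fun z => x s z ⬝ᵥ ((if z < l then Qm z else Qp z)).mulVec (x s z)) volume l b := by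
      rw [intervalIntegrable_iff_integrableOn_Ioc_of_le hlb.le]
      apply MeasureTheory.Integrable.congr
        ((hFpc.integrableOn_compact isCompact_Icc).mono_set Set.Ioc_subset_Icc_self)
      rw [Filter.EventuallyEq, MeasureTheory.ae_restrict_iff' measurableSet_Ioc]
      apply Filter.Eventually.of_forall
      intro z hz
      exact (haep z hz).symm
    rw [← intervalIntegral.integral_add_adjacent_intervals hIm hIp]
    congr 1
    congr 1
    · apply intervalIntegral.integral_congr_ae
      rw [Set.uIoc_of_le hal.le]
      exact haem
    · apply intervalIntegral.integral_congr_ae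
      rw [Set.uIoc_of_le hlb.le]
      exact Filter.Eventually.of_forall haep
  have hfinal := hsum.congr (fun s hs => heq s hs) (heq t ht)
  -- identify the derivative value
  convert hfinal using 1
  · rfl
  · rfl
  have hc := hcont t ht
  have h2 : (Real.sqrt 2)⁻¹ * (Real.sqrt 2)⁻¹ = 1/2 := by
    rw [← mul_inv, Real.mul_self_sqrt (by norm_num : (0:ℝ) ≤ 2)]
    norm_num
  simp only [ebd, fbd, Pi.smul_apply, smul_eq_mul, dotProduct, Matrix.mulVec,
    Fin.sum_univ_two, P1, Pi.add_apply, Pi.sub_apply, Matrix.cons_val', Matrix.cons_val_zero,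
    Matrix.cons_val_one, Matrix.head_cons, Matrix.head_fin_const, Matrix.empty_val',
    Matrix.cons_val_fin_one, Matrix.of_apply]
  norm_num
  simp only [Matrix.mulVec, dotProduct, Fin.sum_univ_two] at hc
  linear_combination (Qm l 0 0 * xm t l 0 + Qm l 0 1 * xm t l 1) * hc
    + (2 * ((Qm a 0 0 * xm t a 0 + Qm a 0 1 * xm t a 1)
        * (Qm a 1 0 * xm t a 0 + Qm a 1 1 * xm t a 1)
      - (Qp b 0 0 * xp t b 0 + Qp b 0 1 * xp t b 1)
        * (Qp b 1 0 * xp t b 0 + Qp b 1 1 * xp t b 1))) * h2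
end

section
/- Let a < l < 0 < b and let Q⁻, Q⁺ : [a,b] → ℝ^{2×2} be continuously differentiable with symmetric values. Let x : [a,b] → ℝ² have components that are piecewise C¹ with respect to l, and define (Ax)(z) := P₁ (d/dz)(Q_l x)(z) for z ∈ [a,b] \ {l} (derivatives taken piecewise). Then ⟨Ax, x⟩_{Q_0} = ⟨Ax, x⟩_{Q_l} + (1/2)∫_l^0 x(z)ᵀ (Q⁻(z) − Q⁺(z)) P₁ (d/dz)(Q⁺ x)(z) dz. -/
open Matrix

/-- The operator `(Ax)(z) = P₁ (d/dz)(Q_l x)(z)` (derivatives taken piecewise with respect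
to the interface position `l`), expressed through the `C¹` pieces `xm, xp` of `x` (with
derivatives `xm', xp'`) and the entrywise derivatives `Qm', Qp'` of `Q⁻, Q⁺`. -/
noncomputable def Aop (Qm Qp Qm' Qp' : ℝ → Matrix (Fin 2) (Fin 2) ℝ)
    (xm xp xm' xp' : ℝ → Fin 2 → ℝ) (l z : ℝ) : Fin 2 → ℝ :=
  if z < l then P1.mulVec ((Qm' z).mulVec (xm z) + (Qm z).mulVec (xm' z))
  else P1.mulVec ((Qp' z).mulVec (xp z) + (Qp z).mulVec (xp' z))

private lemma contOn_dot2 {s : Set ℝ} {u v : ℝ → Fin 2 → ℝ}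
    (hu : ∀ i, ContinuousOn (fun z => u z i) s)
    (hv : ∀ i, ContinuousOn (fun z => v z i) s) :
    ContinuousOn (fun z => u z ⬝ᵥ v z) s := by
  simp only [dotProduct]
  exact continuousOn_finset_sum _ fun i _ => (hu i).mul (hv i)

private lemma contOn_mulVec2 {s : Set ℝ} {M : ℝ → Matrix (Fin 2) (Fin 2) ℝ}
    {v : ℝ → Fin 2 → ℝ} (hM : ∀ i j, ContinuousOn (fun z => M z i j) s)
    (hv : ∀ j, ContinuousOn (fun z => v z j) s) (i : Fin 2) :
    ContinuousOn (fun z => (M z).mulVec (v z) i) s := by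
  simp only [Matrix.mulVec, dotProduct]
  exact continuousOn_finset_sum _ fun j _ => (hM i j).mul (hv j)

/-- Continuity of the basic scalar building block `y ⬝ᵥ R.mulVec (P1.mulVec (Q' y₁ + Q y₁'))`. -/
private lemma contOn_piece {s : Set ℝ} {Q Q' R : ℝ → Matrix (Fin 2) (Fin 2) ℝ}
    {y y₁ y₁' : ℝ → Fin 2 → ℝ}
    (hQ : ∀ i j, ContinuousOn (fun z => Q z i j) s)
    (hQ' : ∀ i j, ContinuousOn (fun z => Q' z i j) s)
    (hR : ∀ i j, ContinuousOn (fun z => R z i j) s)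
    (hy : ∀ i, ContinuousOn (fun z => y z i) s)
    (hy1 : ∀ i, ContinuousOn (fun z => y₁ z i) s)
    (hy1' : ∀ i, ContinuousOn (fun z => y₁' z i) s) :
    ContinuousOn
      (fun z => y z ⬝ᵥ (R z).mulVec (P1.mulVec ((Q' z).mulVec (y₁ z) + (Q z).mulVec (y₁' z)))) s := by
  have hsum : ∀ j, ContinuousOn
      (fun z => ((Q' z).mulVec (y₁ z) + (Q z).mulVec (y₁' z)) j) s := by
    intro j
    simp only [Pi.add_apply]
    exact (contOn_mulVec2 hQ' hy1 j).add (contOn_mulVec2 hQ hy1' j)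
  have hP1 : ∀ j, ContinuousOn
      (fun z => P1.mulVec ((Q' z).mulVec (y₁ z) + (Q z).mulVec (y₁' z)) j) s :=
    contOn_mulVec2 (fun _ _ => continuousOn_const) hsum
  exact contOn_dot2 hy (contOn_mulVec2 hR hP1)

/-- For `a < l < 0 < b`, `Q⁻, Q⁺` `C¹` with symmetric values and `x`
piecewise `C¹` with respect to `l`, with `(Ax)(z) = P₁ (d/dz)(Q_l x)(z)`:
`⟨Ax, x⟩_{Q_0} = ⟨Ax, x⟩_{Q_l} + (1/2)∫_l^0 xᵀ (Q⁻ − Q⁺) P₁ (d/dz)(Q⁺x) dz`,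
where `⟨u,v⟩_Q = (1/2)∫_a^b vᵀ Q u`. -/
theorem stmt10 (a l b : ℝ) (hal : a < l) (hl0 : l < 0) (h0b : 0 < b)
    (Qm Qp Qm' Qp' : ℝ → Matrix (Fin 2) (Fin 2) ℝ)
    (hQm : ∀ i j, ∀ z ∈ Set.Icc a b,
      HasDerivWithinAt (fun ζ => Qm ζ i j) (Qm' z i j) (Set.Icc a b) z)
    (hQm' : ∀ i j, ContinuousOn (fun z => Qm' z i j) (Set.Icc a b))
    (hQp : ∀ i j, ∀ z ∈ Set.Icc a b,
      HasDerivWithinAt (fun ζ => Qp ζ i j) (Qp' z i j) (Set.Icc a b) z)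
    (hQp' : ∀ i j, ContinuousOn (fun z => Qp' z i j) (Set.Icc a b))
    (hQsym : ∀ z ∈ Set.Icc a b, (Qm z).IsSymm ∧ (Qp z).IsSymm)
    (x xm xp xm' xp' : ℝ → Fin 2 → ℝ)
    (hxem : ∀ z ∈ Set.Ico a l, x z = xm z)
    (hxep : ∀ z ∈ Set.Ioc l b, x z = xp z)
    (hxm : ∀ z ∈ Set.Icc a l, HasDerivWithinAt xm (xm' z) (Set.Icc a l) z)
    (hxm' : ContinuousOn xm' (Set.Icc a l))
    (hxp : ∀ z ∈ Set.Icc l b, HasDerivWithinAt xp (xp' z) (Set.Icc l b) z)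
    (hxp' : ContinuousOn xp' (Set.Icc l b)) :
    (1/2) * (∫ z in a..b, x z ⬝ᵥ ((if z < 0 then Qm z else Qp z)).mulVec
        (Aop Qm Qp Qm' Qp' xm xp xm' xp' l z))
    = (1/2) * (∫ z in a..b, x z ⬝ᵥ ((if z < l then Qm z else Qp z)).mulVec
        (Aop Qm Qp Qm' Qp' xm xp xm' xp' l z))
      + (1/2) * ∫ z in l..(0:ℝ), x z ⬝ᵥ ((Qm z - Qp z) * P1).mulVec
          ((Qp' z).mulVec (xp z) + (Qp z).mulVec (xp' z)) := by
  classical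
  open Set MeasureTheory intervalIntegral Interval in
  -- abbreviations for the three integrands
  set f : ℝ → ℝ := fun z => x z ⬝ᵥ ((if z < 0 then Qm z else Qp z)).mulVec
      (Aop Qm Qp Qm' Qp' xm xp xm' xp' l z) with hf
  set g : ℝ → ℝ := fun z => x z ⬝ᵥ ((if z < l then Qm z else Qp z)).mulVec
      (Aop Qm Qp Qm' Qp' xm xp xm' xp' l z) with hg
  set h : ℝ → ℝ := fun z => x z ⬝ᵥ ((Qm z - Qp z) * P1).mulVec
      ((Qp' z).mulVec (xp z) + (Qp z).mulVec (xp' z)) with hh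
  -- the continuous pieces
  set fm : ℝ → ℝ := fun z => xm z ⬝ᵥ (Qm z).mulVec
      (P1.mulVec ((Qm' z).mulVec (xm z) + (Qm z).mulVec (xm' z))) with hfm
  set fp : ℝ → ℝ := fun z => xp z ⬝ᵥ (Qp z).mulVec
      (P1.mulVec ((Qp' z).mulVec (xp z) + (Qp z).mulVec (xp' z))) with hfp
  set fmid : ℝ → ℝ := fun z => xp z ⬝ᵥ (Qm z).mulVec
      (P1.mulVec ((Qp' z).mulVec (xp z) + (Qp z).mulVec (xp' z))) with hfmid
  set hc : ℝ → ℝ := fun z => xp z ⬝ᵥ ((Qm z - Qp z) * P1).mulVec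
      ((Qp' z).mulVec (xp z) + (Qp z).mulVec (xp' z)) with hhc
  have hlb : l < b := hl0.trans h0b
  have hab : a < b := hal.trans hlb
  have hIal : Icc a l ⊆ Icc a b := Icc_subset_Icc le_rfl hlb.le
  have hIl0ab : Icc l 0 ⊆ Icc a b := Icc_subset_Icc hal.le h0b.le
  have hIl0lb : Icc l 0 ⊆ Icc l b := Icc_subset_Icc le_rfl h0b.le
  have hI0bab : Icc (0:ℝ) b ⊆ Icc a b := Icc_subset_Icc (hal.trans hl0).le le_rfl
  have hI0blb : Icc (0:ℝ) b ⊆ Icc l b := Icc_subset_Icc hl0.le le_rfl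
  -- entrywise continuity
  have cQm : ∀ i j, ContinuousOn (fun z => Qm z i j) (Icc a b) :=
    fun i j z hz => (hQm i j z hz).continuousWithinAt
  have cQp : ∀ i j, ContinuousOn (fun z => Qp z i j) (Icc a b) :=
    fun i j z hz => (hQp i j z hz).continuousWithinAt
  have cxm : ∀ i, ContinuousOn (fun z => xm z i) (Icc a l) := fun i =>
    (continuous_apply i).comp_continuousOn (fun z hz => (hxm z hz).continuousWithinAt)
  have cxp : ∀ i, ContinuousOn (fun z => xp z i) (Icc l b) := fun i =>
    (continuous_apply i).comp_continuousOn (fun z hz => (hxp z hz).continuousWithinAt)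
  have cxm' : ∀ i, ContinuousOn (fun z => xm' z i) (Icc a l) := fun i =>
    (continuous_apply i).comp_continuousOn hxm'
  have cxp' : ∀ i, ContinuousOn (fun z => xp' z i) (Icc l b) := fun i =>
    (continuous_apply i).comp_continuousOn hxp'
  -- continuity of the pieces
  have cfm : ContinuousOn fm (Icc a l) :=
    contOn_piece (fun i j => (cQm i j).mono hIal) (fun i j => (hQm' i j).mono hIal)
      (fun i j => (cQm i j).mono hIal) cxm cxm cxm'
  have cfp : ContinuousOn fp (Icc l b) :=
    contOn_piece (fun i j => (cQp i j).mono (Icc_subset_Icc hal.le le_rfl))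
      (fun i j => (hQp' i j).mono (Icc_subset_Icc hal.le le_rfl))
      (fun i j => (cQp i j).mono (Icc_subset_Icc hal.le le_rfl)) cxp cxp cxp'
  have cfmid : ContinuousOn fmid (Icc l 0) :=
    contOn_piece (fun i j => (cQp i j).mono hIl0ab) (fun i j => (hQp' i j).mono hIl0ab)
      (fun i j => (cQm i j).mono hIl0ab) (fun i => (cxp i).mono hIl0lb)
      (fun i => (cxp i).mono hIl0lb) (fun i => (cxp' i).mono hIl0lb)
  -- the key matrix identity : hc = fmid - fp
  have keyid : ∀ z, hc z = fmid z - fp z := by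
    intro z
    simp only [hhc, hfmid, hfp, ← Matrix.mulVec_mulVec, Matrix.sub_mulVec,
      dotProduct_sub]
  have chc : ContinuousOn hc (Icc l 0) := by
    have : ContinuousOn (fun z => fmid z - fp z) (Icc l 0) :=
      cfmid.sub (cfp.mono hIl0lb)
    exact this.congr fun z hz => keyid z
  -- interval integrability of the pieces
  have Ifm : IntervalIntegrable fm volume a l :=
    (by rw [uIcc_of_le hal.le]; exact cfm : ContinuousOn fm (uIcc a l)).intervalIntegrable
  have Ifmid : IntervalIntegrable fmid volume l 0 :=
    (by rw [uIcc_of_le hl0.le]; exact cfmid : ContinuousOn fmid (uIcc l 0)).intervalIntegrable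
  have Ifp_l0 : IntervalIntegrable fp volume l 0 :=
    (by rw [uIcc_of_le hl0.le]; exact cfp.mono hIl0lb :
      ContinuousOn fp (uIcc l 0)).intervalIntegrable
  have Ifp_0b : IntervalIntegrable fp volume 0 b :=
    (by rw [uIcc_of_le h0b.le]; exact cfp.mono hI0blb :
      ContinuousOn fp (uIcc 0 b)).intervalIntegrable
  have Ihc : IntervalIntegrable hc volume l 0 :=
    (by rw [uIcc_of_le hl0.le]; exact chc : ContinuousOn hc (uIcc l 0)).intervalIntegrable
  -- a.e. facts
  have ael : ∀ᵐ z : ℝ, z ≠ l := ae_iff.mpr (by simp)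
  have ae0 : ∀ᵐ z : ℝ, z ≠ (0:ℝ) := ae_iff.mpr (by simp)
  -- congruences
  have E1 : ∀ᵐ z : ℝ, z ∈ Ι a l → f z = fm z := by
    filter_upwards [ael] with z hzl hz
    rw [uIoc_of_le hal.le] at hz
    have hzl' : z < l := lt_of_le_of_ne hz.2 hzl
    simp only [hf, hfm, Aop, if_pos hzl', if_pos (hzl'.trans hl0),
      hxem z ⟨hz.1.le, hzl'⟩]
  have E2 : ∀ᵐ z : ℝ, z ∈ Ι a l → g z = fm z := by
    filter_upwards [ael] with z hzl hz
    rw [uIoc_of_le hal.le] at hz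
    have hzl' : z < l := lt_of_le_of_ne hz.2 hzl
    simp only [hg, hfm, Aop, if_pos hzl', hxem z ⟨hz.1.le, hzl'⟩]
  have E3 : ∀ᵐ z : ℝ, z ∈ Ι l 0 → f z = fmid z := by
    filter_upwards [ae0] with z hz0 hz
    rw [uIoc_of_le hl0.le] at hz
    have hz0' : z < 0 := lt_of_le_of_ne hz.2 hz0
    simp only [hf, hfmid, Aop, if_neg (not_lt.2 hz.1.le), if_pos hz0',
      hxep z ⟨hz.1, hz.2.trans h0b.le⟩]
  have E4 : ∀ z ∈ Ι l 0, g z = fp z := by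
    intro z hz
    rw [uIoc_of_le hl0.le] at hz
    simp only [hg, hfp, Aop, if_neg (not_lt.2 hz.1.le),
      hxep z ⟨hz.1, hz.2.trans h0b.le⟩]
  have E5 : ∀ z ∈ Ι l 0, h z = hc z := by
    intro z hz
    rw [uIoc_of_le hl0.le] at hz
    simp only [hh, hhc, hxep z ⟨hz.1, hz.2.trans h0b.le⟩]
  have E6f : ∀ z ∈ Ι (0:ℝ) b, f z = fp z := by
    intro z hz
    rw [uIoc_of_le h0b.le] at hz
    simp only [hf, hfp, Aop, if_neg (not_lt.2 (hl0.le.trans hz.1.le)),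
      if_neg (not_lt.2 hz.1.le), hxep z ⟨hl0.trans hz.1, hz.2⟩]
  have E6g : ∀ z ∈ Ι (0:ℝ) b, g z = fp z := by
    intro z hz
    rw [uIoc_of_le h0b.le] at hz
    simp only [hg, hfp, Aop, if_neg (not_lt.2 (hl0.le.trans hz.1.le)),
      hxep z ⟨hl0.trans hz.1, hz.2⟩]
  -- transfer integrability
  have trans_int : ∀ (u v : ℝ) (φ ψ : ℝ → ℝ), IntervalIntegrable ψ volume u v →
      (∀ᵐ z : ℝ, z ∈ Ι u v → φ z = ψ z) → IntervalIntegrable φ volume u v := by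
    intro u v φ ψ hψ hφψ
    exact hψ.congr_ae ((ae_restrict_iff' measurableSet_uIoc).2
      (hφψ.mono fun z hz hmem => (hz hmem).symm))
  have If_al : IntervalIntegrable f volume a l := trans_int _ _ _ _ Ifm E1
  have Ig_al : IntervalIntegrable g volume a l := trans_int _ _ _ _ Ifm E2
  have If_l0 : IntervalIntegrable f volume l 0 := trans_int _ _ _ _ Ifmid E3
  have Ig_l0 : IntervalIntegrable g volume l 0 :=
    trans_int _ _ _ _ Ifp_l0 (Filter.Eventually.of_forall E4)
  have Ih_l0 : IntervalIntegrable h volume l 0 :=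
    trans_int _ _ _ _ Ihc (Filter.Eventually.of_forall E5)
  have If_0b : IntervalIntegrable f volume 0 b :=
    trans_int _ _ _ _ Ifp_0b (Filter.Eventually.of_forall E6f)
  have Ig_0b : IntervalIntegrable g volume 0 b :=
    trans_int _ _ _ _ Ifp_0b (Filter.Eventually.of_forall E6g)
  -- split the integrals
  have splitf : (∫ z in a..b, f z)
      = (∫ z in a..l, f z) + (∫ z in l..0, f z) + (∫ z in (0:ℝ)..b, f z) := by
    rw [integral_add_adjacent_intervals If_al If_l0,
      integral_add_adjacent_intervals (If_al.trans If_l0) If_0b]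
  have splitg : (∫ z in a..b, g z)
      = (∫ z in a..l, g z) + (∫ z in l..0, g z) + (∫ z in (0:ℝ)..b, g z) := by
    rw [integral_add_adjacent_intervals Ig_al Ig_l0,
      integral_add_adjacent_intervals (Ig_al.trans Ig_l0) Ig_0b]
  -- identify the pieces
  have eq_al : (∫ z in a..l, f z) = ∫ z in a..l, g z := by
    rw [integral_congr_ae E1, integral_congr_ae E2]
  have eq_0b : (∫ z in (0:ℝ)..b, f z) = ∫ z in (0:ℝ)..b, g z := by
    rw [integral_congr_ae (Filter.Eventually.of_forall E6f),
      integral_congr_ae (Filter.Eventually.of_forall E6g)]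
  have eq_l0 : (∫ z in l..0, f z) = (∫ z in l..0, g z) + ∫ z in l..0, h z := by
    rw [integral_congr_ae E3, integral_congr_ae (Filter.Eventually.of_forall E4),
      integral_congr_ae (Filter.Eventually.of_forall E5)]
    have : (∫ z in l..0, fmid z) = ∫ z in l..0, (fp z + hc z) := by
      apply integral_congr
      intro z _
      show fmid z = fp z + hc z
      rw [keyid z]; ring
    rw [this, integral_add Ifp_l0 Ihc]
  rw [splitf, splitg, eq_al, eq_0b, eq_l0]
  ring
end

section
/- Let a < 0 < b and let Q⁻, Q⁺ ∈ C¹([a,b], ℝ^{2×2}) be diagonal, Q^±(z) = diag(q₁₁^±(z), q₂₂^±(z)), with m I₂ ≤ Q^±(z) ≤ M I₂ for all z ∈ [a,b] and some 0 < m ≤ M, and satisfying q₁₁⁺(0)/q₁₁⁻(0) = 1 and q₁₁⁺(z)/q₁₁⁻(z) = q₂₂⁺(z)/q₂₂⁻(z) for all z ∈ [a,b]. Then there exists ω > 0, depending only on Q⁻, Q⁺, a, b, such that the following holds for every interface position l ∈ (a,b): for every x : [a,b] → ℝ² whose components are piecewise C¹ with respect to l and whose second component satisfies the interface condition (Q_l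 x)₂(l⁺) = 0 = (Q_l x)₂(l⁻), and which satisfies the frozen-interface dissipativity ⟨Ax, x⟩_{Q_l} ≤ 0 where (Ax)(z) := P₁ (d/dz)(Q_l x)(z) for z ∈ [a,b] \ {l} (derivatives taken piecewise), one has ⟨Ax, x⟩_{Q_0} ≤ ω ‖x‖_{Q_0}². -/
open Matrix

open MeasureTheory Set intervalIntegral

lemma quad_lower {A : Matrix (Fin 2) (Fin 2) ℝ} {c : ℝ}
    (h : (A - c • (1 : Matrix (Fin 2) (Fin 2) ℝ)).PosSemidef) (v : Fin 2 → ℝ) :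
    c * (v 0 ^ 2 + v 1 ^ 2) ≤ v ⬝ᵥ A.mulVec v := by
  have h2 := h.dotProduct_mulVec_nonneg v
  simp only [Matrix.mulVec, dotProduct, Fin.sum_univ_two, Matrix.sub_apply,
    Matrix.smul_apply, Matrix.one_apply, star, Pi.star_apply,
    star_trivial, smul_eq_mul, smul_zero, if_true, id] at h2 ⊢
  simp only [eq_false (by decide : ¬((0:Fin 2) = 1)), eq_false (by decide : ¬((1:Fin 2) = 0)),
    if_false] at h2
  ring_nf at h2 ⊢
  linarith [h2]

lemma quad_upper {A : Matrix (Fin 2) (Fin 2) ℝ} {c : ℝ}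
    (h : (c • (1 : Matrix (Fin 2) (Fin 2) ℝ) - A).PosSemidef) (v : Fin 2 → ℝ) :
    v ⬝ᵥ A.mulVec v ≤ c * (v 0 ^ 2 + v 1 ^ 2) := by
  have h2 := h.dotProduct_mulVec_nonneg v
  simp only [Matrix.mulVec, dotProduct, Fin.sum_univ_two, Matrix.sub_apply,
    Matrix.smul_apply, Matrix.one_apply, star, Pi.star_apply,
    star_trivial, smul_eq_mul, smul_zero, if_true, id] at h2 ⊢
  simp only [eq_false (by decide : ¬((0:Fin 2) = 1)), eq_false (by decide : ¬((1:Fin 2) = 0)),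
    if_false] at h2
  ring_nf at h2 ⊢
  linarith [h2]

lemma entry_bounds {A : Matrix (Fin 2) (Fin 2) ℝ} {c C : ℝ}
    (h1 : (A - c • (1 : Matrix (Fin 2) (Fin 2) ℝ)).PosSemidef)
    (h2 : (C • (1 : Matrix (Fin 2) (Fin 2) ℝ) - A).PosSemidef) :
    c ≤ A 0 0 ∧ A 0 0 ≤ C ∧ c ≤ A 1 1 ∧ A 1 1 ≤ C := by
  have a1 := quad_lower h1 ![1,0]
  have a2 := quad_upper h2 ![1,0]
  have a3 := quad_lower h1 ![0,1]
  have a4 := quad_upper h2 ![0,1]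
  simp [Matrix.mulVec, dotProduct, Fin.sum_univ_two] at a1 a2 a3 a4
  exact ⟨by linarith, by linarith, by linarith, by linarith⟩

lemma integrand_comp (Cq A B : Matrix (Fin 2) (Fin 2) ℝ) (v u u' : Fin 2 → ℝ)
    (hC1 : Cq 0 1 = 0) (hC2 : Cq 1 0 = 0) (hA1 : A 0 1 = 0) (hA2 : A 1 0 = 0)
    (hB1 : B 0 1 = 0) (hB2 : B 1 0 = 0) :
    v ⬝ᵥ Cq.mulVec (P1.mulVec (A.mulVec u + B.mulVec u')) =
      -(Cq 0 0 * v 0 * (A 1 1 * u 1 + B 1 1 * u' 1)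
        + Cq 1 1 * v 1 * (A 0 0 * u 0 + B 0 0 * u' 0)) := by
  simp [P1, Matrix.mulVec, dotProduct, Fin.sum_univ_two, Matrix.vecHead, Matrix.vecTail, hC1, hC2, hA1, hA2, hB1, hB2]
  ring

lemma ae_ne_pt (p : ℝ) : ∀ᵐ z : ℝ ∂(volume), z ≠ p := by
  rw [MeasureTheory.ae_iff]
  simp only [not_ne_iff, Set.setOf_eq_eq_singleton]
  exact measure_singleton p

lemma ae_restrict_eq_off {s : Set ℝ} (hs : MeasurableSet s) (p : ℝ) {f g : ℝ → ℝ}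
    (h : ∀ z ∈ s, z ≠ p → f z = g z) :
    f =ᵐ[volume.restrict s] g := by
  have h1 := ae_restrict_mem (μ := volume) hs
  have h2 := ae_restrict_of_ae (μ := volume) (s := s) (ae_ne_pt p)
  filter_upwards [h1, h2] with z hz hzp using h z hz hzp

lemma integral_congr_off {c d p : ℝ} {f g : ℝ → ℝ}
    (h : ∀ z ∈ Set.uIoc c d, z ≠ p → f z = g z) :
    ∫ z in c..d, f z = ∫ z in c..d, g z := by
  refine integral_congr_ae ?_
  filter_upwards [ae_ne_pt p] with z hz hmem
  exact h z hmem hz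

lemma intervalIntegrable_congr_off {c d p : ℝ} {f g : ℝ → ℝ}
    (h : ∀ z ∈ Set.uIoc c d, z ≠ p → f z = g z)
    (hg : IntervalIntegrable g volume c d) : IntervalIntegrable f volume c d :=
  hg.congr_ae (ae_restrict_eq_off measurableSet_uIoc p h).symm

lemma ftc_icc {c d : ℝ} (hcd : c ≤ d) {f f' : ℝ → ℝ}
    (hd : ∀ z ∈ Set.Icc c d, HasDerivWithinAt f (f' z) (Set.Icc c d) z)
    (hc : ContinuousOn f' (Set.Icc c d)) :
    ∫ z in c..d, f' z = f d - f c := by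
  refine integral_eq_sub_of_hasDeriv_right_of_le hcd
    (fun z hz => (hd z hz).continuousWithinAt) (fun z hz => ?_)
    (hc.intervalIntegrable_of_Icc hcd)
  exact ((hd z (Set.Ioo_subset_Icc_self hz)).hasDerivAt
    (Icc_mem_nhds hz.1 hz.2)).hasDerivWithinAt

lemma piece {c d : ℝ} (hcd : c ≤ d)
    {ρ σ q1 q2 q1' q2' y1 y2 y1' y2' f : ℝ → ℝ}
    (hρ : ∀ z ∈ Set.Icc c d, HasDerivWithinAt ρ (σ z) (Set.Icc c d) z)
    (hσ : ContinuousOn σ (Set.Icc c d))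
    (hq1 : ∀ z ∈ Set.Icc c d, HasDerivWithinAt q1 (q1' z) (Set.Icc c d) z)
    (hq1' : ContinuousOn q1' (Set.Icc c d))
    (hq2 : ∀ z ∈ Set.Icc c d, HasDerivWithinAt q2 (q2' z) (Set.Icc c d) z)
    (hq2' : ContinuousOn q2' (Set.Icc c d))
    (hy1 : ∀ z ∈ Set.Icc c d, HasDerivWithinAt y1 (y1' z) (Set.Icc c d) z)
    (hy1' : ContinuousOn y1' (Set.Icc c d))
    (hy2 : ∀ z ∈ Set.Icc c d, HasDerivWithinAt y2 (y2' z) (Set.Icc c d) z)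
    (hy2' : ContinuousOn y2' (Set.Icc c d))
    (hf : ∀ z ∈ Set.Ioo c d, f z =
      -(ρ z * ((q1' z * y1 z + q1 z * y1' z) * (q2 z * y2 z)
        + (q1 z * y1 z) * (q2' z * y2 z + q2 z * y2' z)))) :
    IntervalIntegrable f volume c d ∧
    ∫ z in c..d, f z = (∫ z in c..d, σ z * ((q1 z * y1 z) * (q2 z * y2 z)))
      + (ρ c * ((q1 c * y1 c) * (q2 c * y2 c)) - ρ d * ((q1 d * y1 d) * (q2 d * y2 d))) := by
  set F : ℝ → ℝ := fun z => (q1 z * y1 z) * (q2 z * y2 z) with hF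
  set D : ℝ → ℝ := fun z => (q1' z * y1 z + q1 z * y1' z) * (q2 z * y2 z)
      + (q1 z * y1 z) * (q2' z * y2 z + q2 z * y2' z) with hD
  have hFd : ∀ z ∈ Set.Icc c d, HasDerivWithinAt F (D z) (Set.Icc c d) z :=
    fun z hz => ((hq1 z hz).mul (hy1 z hz)).mul ((hq2 z hz).mul (hy2 z hz))
  have hq1c : ContinuousOn q1 (Set.Icc c d) := fun z hz => (hq1 z hz).continuousWithinAt
  have hq2c : ContinuousOn q2 (Set.Icc c d) := fun z hz => (hq2 z hz).continuousWithinAt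
  have hy1c : ContinuousOn y1 (Set.Icc c d) := fun z hz => (hy1 z hz).continuousWithinAt
  have hy2c : ContinuousOn y2 (Set.Icc c d) := fun z hz => (hy2 z hz).continuousWithinAt
  have hρc : ContinuousOn ρ (Set.Icc c d) := fun z hz => (hρ z hz).continuousWithinAt
  have hFc : ContinuousOn F (Set.Icc c d) := (hq1c.mul hy1c).mul (hq2c.mul hy2c)
  have hDc : ContinuousOn D (Set.Icc c d) :=
    (((hq1'.mul hy1c).add (hq1c.mul hy1')).mul (hq2c.mul hy2c)).add
      ((hq1c.mul hy1c).mul ((hq2'.mul hy2c).add (hq2c.mul hy2')))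
  have hGd : ∀ z ∈ Set.Icc c d, HasDerivWithinAt (fun z => ρ z * F z)
      (σ z * F z + ρ z * D z) (Set.Icc c d) z := fun z hz => (hρ z hz).mul (hFd z hz)
  have hGc : ContinuousOn (fun z => σ z * F z + ρ z * D z) (Set.Icc c d) :=
    (hσ.mul hFc).add (hρc.mul hDc)
  have hftc : ∫ z in c..d, (σ z * F z + ρ z * D z) = ρ d * F d - ρ c * F c :=
    ftc_icc hcd hGd hGc
  set g : ℝ → ℝ := fun z => σ z * F z - (σ z * F z + ρ z * D z) with hg
  have hgc : ContinuousOn g (Set.Icc c d) := (hσ.mul hFc).sub hGc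
  have heq : ∀ z ∈ Set.uIoc c d, z ≠ d → f z = g z := by
    intro z hz hzd
    rw [Set.uIoc_of_le hcd] at hz
    have hzo : z ∈ Set.Ioo c d := ⟨hz.1, lt_of_le_of_ne hz.2 hzd⟩
    rw [hf z hzo, hg]
    simp only [hD, hF]
    ring
  have hgi : IntervalIntegrable g volume c d := hgc.intervalIntegrable_of_Icc hcd
  have hfi : IntervalIntegrable f volume c d := intervalIntegrable_congr_off heq hgi
  refine ⟨hfi, ?_⟩
  rw [integral_congr_off heq]
  have hsplit : ∫ z in c..d, g z =
      (∫ z in c..d, σ z * F z) - ∫ z in c..d, (σ z * F z + ρ z * D z) :=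
    integral_sub ((hσ.mul hFc).intervalIntegrable_of_Icc hcd) (hGc.intervalIntegrable_of_Icc hcd)
  rw [hsplit, hftc]
  ring

lemma ratio_alg {qp1 qp2 qm1 qm2 v1 v2 d1 d2 : ℝ} (hqm1 : qm1 ≠ 0)
    (hcross : qp1 * qm2 = qp2 * qm1) :
    -(qp1 * v1 * d2 + qp2 * v2 * d1) = -((qp1 / qm1) * (d1 * (qm2 * v2) + (qm1 * v1) * d2)) := by
  field_simp
  linear_combination (v2 * d1) * hcross

set_option maxHeartbeats 4000000 in
/-- quasi-dissipativity estimate of Theorem 3.  Let `a < 0 < b` and let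
`Q⁻, Q⁺ ∈ C¹([a,b], ℝ^{2×2})` be diagonal with `m I₂ ≤ Q^± ≤ M I₂` (`0 < m ≤ M`),
satisfying the ratio conditions of assumption (A1).  Then there is `ω > 0`, independent of
the interface position, such that for every `l ∈ (a,b)` and every `x` piecewise `C¹` with
respect to `l` satisfying the interface condition `(Q_l x)₂(l⁺) = 0 = (Q_l x)₂(l⁻)` and the
frozen-interface dissipativity `⟨Ax, x⟩_{Q_l} ≤ 0`, one has `⟨Ax, x⟩_{Q_0} ≤ ω ‖x‖_{Q_0}²`,
where `⟨u,v⟩_Q = (1/2)∫_a^b vᵀ Q u` and `(Ax)(z) = P₁ (d/dz)(Q_l x)(z)` piecewise. -/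
theorem stmt12 (a b m M : ℝ) (ha : a < 0) (hb : 0 < b) (hm : 0 < m) (hmM : m ≤ M)
    (Qm Qp Qm' Qp' : ℝ → Matrix (Fin 2) (Fin 2) ℝ)
    (hQmd : ∀ i j, ∀ z ∈ Set.Icc a b,
      HasDerivWithinAt (fun ζ => Qm ζ i j) (Qm' z i j) (Set.Icc a b) z)
    (hQm' : ∀ i j, ContinuousOn (fun z => Qm' z i j) (Set.Icc a b))
    (hQpd : ∀ i j, ∀ z ∈ Set.Icc a b,
      HasDerivWithinAt (fun ζ => Qp ζ i j) (Qp' z i j) (Set.Icc a b) z)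
    (hQp' : ∀ i j, ContinuousOn (fun z => Qp' z i j) (Set.Icc a b))
    (hdiag : ∀ z ∈ Set.Icc a b, (Qm z).IsDiag ∧ (Qp z).IsDiag)
    (hbound : ∀ z ∈ Set.Icc a b,
      (Qm z - m • (1 : Matrix (Fin 2) (Fin 2) ℝ)).PosSemidef ∧
      (M • (1 : Matrix (Fin 2) (Fin 2) ℝ) - Qm z).PosSemidef ∧
      (Qp z - m • (1 : Matrix (Fin 2) (Fin 2) ℝ)).PosSemidef ∧
      (M • (1 : Matrix (Fin 2) (Fin 2) ℝ) - Qp z).PosSemidef)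
    (hratio0 : Qp 0 0 0 / Qm 0 0 0 = 1)
    (hratio : ∀ z ∈ Set.Icc a b, Qp z 0 0 / Qm z 0 0 = Qp z 1 1 / Qm z 1 1) :
    ∃ ω > 0, ∀ l ∈ Set.Ioo a b, ∀ x xm xp xm' xp' : ℝ → Fin 2 → ℝ,
      (∀ z ∈ Set.Ico a l, x z = xm z) →
      (∀ z ∈ Set.Ioc l b, x z = xp z) →
      (∀ z ∈ Set.Icc a l, HasDerivWithinAt xm (xm' z) (Set.Icc a l) z) →
      ContinuousOn xm' (Set.Icc a l) →
      (∀ z ∈ Set.Icc l b, HasDerivWithinAt xp (xp' z) (Set.Icc l b) z) →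
      ContinuousOn xp' (Set.Icc l b) →
      -- interface condition `(Q_l x)₂(l⁺) = 0 = (Q_l x)₂(l⁻)`:
      ((Qp l).mulVec (xp l)) 1 = 0 →
      ((Qm l).mulVec (xm l)) 1 = 0 →
      -- frozen-interface dissipativity `⟨Ax, x⟩_{Q_l} ≤ 0`:
      (1/2) * (∫ z in a..b, x z ⬝ᵥ ((if z < l then Qm z else Qp z)).mulVec
          (Aop Qm Qp Qm' Qp' xm xp xm' xp' l z)) ≤ 0 →
      -- conclusion `⟨Ax, x⟩_{Q_0} ≤ ω ‖x‖_{Q_0}²`: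
      (1/2) * (∫ z in a..b, x z ⬝ᵥ ((if z < 0 then Qm z else Qp z)).mulVec
          (Aop Qm Qp Qm' Qp' xm xp xm' xp' l z))
        ≤ ω * ((1/2) * ∫ z in a..b,
            x z ⬝ᵥ ((if z < 0 then Qm z else Qp z)).mulVec (x z)) := by
  
  have hab : a ≤ b := (ha.trans hb).le
  have halb : a < b := ha.trans hb
  have hMpos : 0 < M := hm.trans_le hmM
  -- diagonal entries vanish
  have hQm01 : ∀ z ∈ Set.Icc a b, Qm z 0 1 = 0 := fun z hz => (hdiag z hz).1 (by decide)
  have hQm10 : ∀ z ∈ Set.Icc a b, Qm z 1 0 = 0 := fun z hz => (hdiag z hz).1 (by decide)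
  have hQp01 : ∀ z ∈ Set.Icc a b, Qp z 0 1 = 0 := fun z hz => (hdiag z hz).2 (by decide)
  have hQp10 : ∀ z ∈ Set.Icc a b, Qp z 1 0 = 0 := fun z hz => (hdiag z hz).2 (by decide)
  -- derivatives of off-diagonal entries vanish
  have hoff : ∀ (Q Q' : ℝ → Matrix (Fin 2) (Fin 2) ℝ),
      (∀ i j, ∀ z ∈ Set.Icc a b, HasDerivWithinAt (fun ζ => Q ζ i j) (Q' z i j) (Set.Icc a b) z) →
      (∀ z ∈ Set.Icc a b, ∀ (i j : Fin 2), i ≠ j → Q z i j = 0) →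
      ∀ (i j : Fin 2), i ≠ j → ∀ z ∈ Set.Icc a b, Q' z i j = 0 := by
    intro Q Q' hQd hQ0 i j hij z hz
    have h0 : HasDerivWithinAt (fun ζ => Q ζ i j) 0 (Set.Icc a b) z :=
      (hasDerivWithinAt_const z _ (0:ℝ)).congr (fun ζ hζ => hQ0 ζ hζ i j hij) (hQ0 z hz i j hij)
    exact ((uniqueDiffOn_Icc halb) z hz).eq_deriv _ (hQd i j z hz) h0
  have hQm'01 : ∀ z ∈ Set.Icc a b, Qm' z 0 1 = 0 :=
    hoff Qm Qm' hQmd (fun z hz i j hij => (hdiag z hz).1 hij) 0 1 (by decide)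
  have hQm'10 : ∀ z ∈ Set.Icc a b, Qm' z 1 0 = 0 :=
    hoff Qm Qm' hQmd (fun z hz i j hij => (hdiag z hz).1 hij) 1 0 (by decide)
  have hQp'01 : ∀ z ∈ Set.Icc a b, Qp' z 0 1 = 0 :=
    hoff Qp Qp' hQpd (fun z hz i j hij => (hdiag z hz).2 hij) 0 1 (by decide)
  have hQp'10 : ∀ z ∈ Set.Icc a b, Qp' z 1 0 = 0 :=
    hoff Qp Qp' hQpd (fun z hz i j hij => (hdiag z hz).2 hij) 1 0 (by decide)
  -- entry bounds
  have hQmB : ∀ z ∈ Set.Icc a b,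
      m ≤ Qm z 0 0 ∧ Qm z 0 0 ≤ M ∧ m ≤ Qm z 1 1 ∧ Qm z 1 1 ≤ M :=
    fun z hz => entry_bounds (hbound z hz).1 (hbound z hz).2.1
  have hQpB : ∀ z ∈ Set.Icc a b,
      m ≤ Qp z 0 0 ∧ Qp z 0 0 ≤ M ∧ m ≤ Qp z 1 1 ∧ Qp z 1 1 ≤ M :=
    fun z hz => entry_bounds (hbound z hz).2.2.1 (hbound z hz).2.2.2
  have hQmne : ∀ z ∈ Set.Icc a b, Qm z 0 0 ≠ 0 :=
    fun z hz => ne_of_gt (lt_of_lt_of_le hm (hQmB z hz).1)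
  have hQm11ne : ∀ z ∈ Set.Icc a b, Qm z 1 1 ≠ 0 :=
    fun z hz => ne_of_gt (lt_of_lt_of_le hm (hQmB z hz).2.2.1)
  have hQpne : ∀ z ∈ Set.Icc a b, Qp z 0 0 ≠ 0 :=
    fun z hz => ne_of_gt (lt_of_lt_of_le hm (hQpB z hz).1)
  have hQp11ne : ∀ z ∈ Set.Icc a b, Qp z 1 1 ≠ 0 :=
    fun z hz => ne_of_gt (lt_of_lt_of_le hm (hQpB z hz).2.2.1)
  -- continuity of entries
  have hQmc : ContinuousOn (fun z => Qm z 0 0) (Set.Icc a b) :=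
    fun z hz => (hQmd 0 0 z hz).continuousWithinAt
  have hQpc : ContinuousOn (fun z => Qp z 0 0) (Set.Icc a b) :=
    fun z hz => (hQpd 0 0 z hz).continuousWithinAt
  -- derivative of the ratio functions
  have hρd : ∀ z ∈ Set.Icc a b, HasDerivWithinAt (fun ζ => Qp ζ 0 0 / Qm ζ 0 0)
      ((Qp' z 0 0 * Qm z 0 0 - Qp z 0 0 * Qm' z 0 0) / (Qm z 0 0)^2) (Set.Icc a b) z :=
    fun z hz => (hQpd 0 0 z hz).div (hQmd 0 0 z hz) (hQmne z hz)
  have hσc : ContinuousOn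
      (fun z => (Qp' z 0 0 * Qm z 0 0 - Qp z 0 0 * Qm' z 0 0) / (Qm z 0 0)^2) (Set.Icc a b) :=
    ContinuousOn.div (((hQp' 0 0).mul hQmc).sub (hQpc.mul (hQm' 0 0)))
      (hQmc.pow 2) (fun z hz => pow_ne_zero 2 (hQmne z hz))
  have hρ'd : ∀ z ∈ Set.Icc a b, HasDerivWithinAt (fun ζ => Qm ζ 0 0 / Qp ζ 0 0)
      ((Qm' z 0 0 * Qp z 0 0 - Qm z 0 0 * Qp' z 0 0) / (Qp z 0 0)^2) (Set.Icc a b) z :=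
    fun z hz => (hQmd 0 0 z hz).div (hQpd 0 0 z hz) (hQpne z hz)
  have hσ'c : ContinuousOn
      (fun z => (Qm' z 0 0 * Qp z 0 0 - Qm z 0 0 * Qp' z 0 0) / (Qp z 0 0)^2) (Set.Icc a b) :=
    ContinuousOn.div (((hQm' 0 0).mul hQpc).sub (hQmc.mul (hQp' 0 0)))
      (hQpc.pow 2) (fun z hz => pow_ne_zero 2 (hQpne z hz))
  -- uniform bound on derivatives of entries (0 0)
  obtain ⟨Cm, hCmB⟩ := IsCompact.exists_bound_of_continuousOn isCompact_Icc (hQm' 0 0)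
  obtain ⟨Cp, hCpB⟩ := IsCompact.exists_bound_of_continuousOn isCompact_Icc (hQp' 0 0)
  set C : ℝ := max (max Cm Cp) 0 with hC
  have hC0 : 0 ≤ C := le_max_right _ _
  have hCm' : ∀ z ∈ Set.Icc a b, |Qm' z 0 0| ≤ C := by
    intro z hz
    have := hCmB z hz
    rw [Real.norm_eq_abs] at this
    exact this.trans ((le_max_left _ _).trans (le_max_left _ _))
  have hCp' : ∀ z ∈ Set.Icc a b, |Qp' z 0 0| ≤ C := by
    intro z hz
    have := hCpB z hz
    rw [Real.norm_eq_abs] at this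
    exact this.trans ((le_max_right _ _).trans (le_max_left _ _))
  set K : ℝ := 2*M*C/m^2 + 1 with hK
  have hK1 : 1 ≤ K := by
    have : 0 ≤ 2*M*C/m^2 := by positivity
    rw [hK]; linarith
  have hKpos : 0 < K := lt_of_lt_of_le one_pos hK1
  set ω : ℝ := K * M^2 / (2*m) with hω
  have hωpos : 0 < ω := by rw [hω]; positivity
  -- generic bound for the derivative of a ratio
  have hσB : ∀ u v u' v' : ℝ, m ≤ v → v ≤ M → m ≤ u → u ≤ M → |u'| ≤ C → |v'| ≤ C →
      |(u' * v - u * v') / v^2| ≤ K := by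
    intro u v u' v' h1 h2 h3 h4 h5 h6
    have hv2 : m^2 ≤ v^2 := by nlinarith
    have hnum : |u' * v - u * v'| ≤ 2*M*C := by
      have h7 := abs_add_le (u'*v) (-(u*v'))
      rw [abs_neg, ← sub_eq_add_neg] at h7
      have e1 : |u' * v| ≤ C * M := by
        rw [abs_mul]
        exact mul_le_mul h5 (by rw [abs_of_nonneg (by linarith)]; exact h2) (abs_nonneg _) hC0
      have e2 : |u * v'| ≤ M * C := by
        rw [abs_mul]
        exact mul_le_mul (by rw [abs_of_nonneg (by linarith)]; exact h4) h6 (abs_nonneg _)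
          hMpos.le
      calc |u'*v - u*v'| ≤ |u'*v| + |u*v'| := h7
        _ ≤ C*M + M*C := add_le_add e1 e2
        _ = 2*M*C := by ring
    calc |(u'*v - u*v')/v^2| = |u'*v - u*v'| / v^2 := by
          rw [abs_div, abs_of_nonneg (sq_nonneg v)]
      _ ≤ (2*M*C) / m^2 := div_le_div₀ (by positivity) hnum (by positivity) hv2
      _ ≤ K := by rw [hK]; linarith
  refine ⟨ω, hωpos, ?_⟩
  intro l hl x xm xp xm' xp' hxm hxp hdm hcm' hdp hcp' hifp hifm hdiss
  have hal : a ≤ l := hl.1.le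
  have hlb : l ≤ b := hl.2.le
  have hlI : l ∈ Set.Icc a b := ⟨hal, hlb⟩
  have hsubml : Set.Icc a l ⊆ Set.Icc a b := Set.Icc_subset_Icc le_rfl hlb
  have hsubpl : Set.Icc l b ⊆ Set.Icc a b := Set.Icc_subset_Icc hal le_rfl
  -- component derivatives and continuity
  have hdm0 : ∀ z ∈ Set.Icc a l, HasDerivWithinAt (fun ζ => xm ζ 0) (xm' z 0) (Set.Icc a l) z :=
    fun z hz => hasDerivWithinAt_pi.mp (hdm z hz) 0
  have hdm1 : ∀ z ∈ Set.Icc a l, HasDerivWithinAt (fun ζ => xm ζ 1) (xm' z 1) (Set.Icc a l) z :=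
    fun z hz => hasDerivWithinAt_pi.mp (hdm z hz) 1
  have hdp0 : ∀ z ∈ Set.Icc l b, HasDerivWithinAt (fun ζ => xp ζ 0) (xp' z 0) (Set.Icc l b) z :=
    fun z hz => hasDerivWithinAt_pi.mp (hdp z hz) 0
  have hdp1 : ∀ z ∈ Set.Icc l b, HasDerivWithinAt (fun ζ => xp ζ 1) (xp' z 1) (Set.Icc l b) z :=
    fun z hz => hasDerivWithinAt_pi.mp (hdp z hz) 1
  have hcm'0 : ContinuousOn (fun ζ => xm' ζ 0) (Set.Icc a l) :=
    (continuous_apply (0 : Fin 2)).comp_continuousOn hcm'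
  have hcm'1 : ContinuousOn (fun ζ => xm' ζ 1) (Set.Icc a l) :=
    (continuous_apply (1 : Fin 2)).comp_continuousOn hcm'
  have hcp'0 : ContinuousOn (fun ζ => xp' ζ 0) (Set.Icc l b) :=
    (continuous_apply (0 : Fin 2)).comp_continuousOn hcp'
  have hcp'1 : ContinuousOn (fun ζ => xp' ζ 1) (Set.Icc l b) :=
    (continuous_apply (1 : Fin 2)).comp_continuousOn hcp'
  -- interface conditions scalarized
  have hum2l : Qm l 1 1 * xm l 1 = 0 := by
    have h := hifm
    simp only [Matrix.mulVec, dotProduct, Fin.sum_univ_two] at h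
    rw [hQm10 l hlI, zero_mul, zero_add] at h
    exact h
  have hup2l : Qp l 1 1 * xp l 1 = 0 := by
    have h := hifp
    simp only [Matrix.mulVec, dotProduct, Fin.sum_univ_two] at h
    rw [hQp10 l hlI, zero_mul, zero_add] at h
    exact h
  -- nonnegativity of the energy integrand
  have hpos : ∀ z ∈ Set.Icc a b,
      0 ≤ x z ⬝ᵥ ((if z < 0 then Qm z else Qp z)).mulVec (x z) := by
    intro z hz
    have h1 : 0 ≤ m * (x z 0 ^ 2 + x z 1 ^ 2) := by positivity
    by_cases h0 : z < 0
    · rw [if_pos h0]; exact h1.trans (quad_lower (hbound z hz).1 (x z))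
    · rw [if_neg h0]; exact h1.trans (quad_lower (hbound z hz).2.2.1 (x z))
  have hNnonneg : 0 ≤ (1/2 : ℝ) * ∫ z in a..b,
      x z ⬝ᵥ ((if z < 0 then Qm z else Qp z)).mulVec (x z) := by
    have := intervalIntegral.integral_nonneg (μ := MeasureTheory.volume) hab
      (fun u hu => hpos u hu)
    linarith
  -- the two pieces of the frozen-interface integral
  obtain ⟨iP1, vP1⟩ := piece (f := fun z => x z ⬝ᵥ ((if z < l then Qm z else Qp z)).mulVec
      (Aop Qm Qp Qm' Qp' xm xp xm' xp' l z))
    (ρ := fun _ => (1:ℝ)) (σ := fun _ => (0:ℝ))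
    (q1 := fun ζ => Qm ζ 0 0) (q1' := fun ζ => Qm' ζ 0 0)
    (q2 := fun ζ => Qm ζ 1 1) (q2' := fun ζ => Qm' ζ 1 1)
    (y1 := fun ζ => xm ζ 0) (y1' := fun ζ => xm' ζ 0)
    (y2 := fun ζ => xm ζ 1) (y2' := fun ζ => xm' ζ 1)
    hal (fun z _ => hasDerivWithinAt_const z _ 1) continuousOn_const
    (fun z hz => (hQmd 0 0 z (hsubml hz)).mono hsubml) ((hQm' 0 0).mono hsubml)
    (fun z hz => (hQmd 1 1 z (hsubml hz)).mono hsubml) ((hQm' 1 1).mono hsubml)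
    hdm0 hcm'0 hdm1 hcm'1
    (by
      intro z hz
      have hzl : z < l := hz.2
      have hzI : z ∈ Set.Icc a b := ⟨hz.1.le, hzl.le.trans hlb⟩
      simp only [Aop, hzl, if_true, hxm z ⟨hz.1.le, hzl⟩]
      rw [integrand_comp (Qm z) (Qm' z) (Qm z) (xm z) (xm z) (xm' z) (hQm01 z hzI)
        (hQm10 z hzI) (hQm'01 z hzI) (hQm'10 z hzI) (hQm01 z hzI) (hQm10 z hzI)]
      ring)
  obtain ⟨iP2, vP2⟩ := piece (f := fun z => x z ⬝ᵥ ((if z < l then Qm z else Qp z)).mulVec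
      (Aop Qm Qp Qm' Qp' xm xp xm' xp' l z))
    (ρ := fun _ => (1:ℝ)) (σ := fun _ => (0:ℝ))
    (q1 := fun ζ => Qp ζ 0 0) (q1' := fun ζ => Qp' ζ 0 0)
    (q2 := fun ζ => Qp ζ 1 1) (q2' := fun ζ => Qp' ζ 1 1)
    (y1 := fun ζ => xp ζ 0) (y1' := fun ζ => xp' ζ 0)
    (y2 := fun ζ => xp ζ 1) (y2' := fun ζ => xp' ζ 1)
    hlb (fun z _ => hasDerivWithinAt_const z _ 1) continuousOn_const
    (fun z hz => (hQpd 0 0 z (hsubpl hz)).mono hsubpl) ((hQp' 0 0).mono hsubpl)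
    (fun z hz => (hQpd 1 1 z (hsubpl hz)).mono hsubpl) ((hQp' 1 1).mono hsubpl)
    hdp0 hcp'0 hdp1 hcp'1
    (by
      intro z hz
      have hzl : ¬ z < l := not_lt.mpr hz.1.le
      have hzI : z ∈ Set.Icc a b := ⟨hal.trans hz.1.le, hz.2.le⟩
      simp only [Aop, hzl, if_false, hxp z ⟨hz.1, hz.2.le⟩]
      rw [integrand_comp (Qp z) (Qp' z) (Qp z) (xp z) (xp z) (xp' z) (hQp01 z hzI)
        (hQp10 z hzI) (hQp'01 z hzI) (hQp'10 z hzI) (hQp01 z hzI) (hQp10 z hzI)]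
      ring)
  simp only [zero_mul, intervalIntegral.integral_zero, one_mul, zero_add] at vP1 vP2
  rw [hum2l, mul_zero, sub_zero] at vP1
  rw [hup2l, mul_zero, zero_sub] at vP2
  have hQlval : (∫ z in a..b, x z ⬝ᵥ ((if z < l then Qm z else Qp z)).mulVec
      (Aop Qm Qp Qm' Qp' xm xp xm' xp' l z)) =
      (Qm a 0 0 * xm a 0) * (Qm a 1 1 * xm a 1)
      - (Qp b 0 0 * xp b 0) * (Qp b 1 1 * xp b 1) := by
    rw [← intervalIntegral.integral_add_adjacent_intervals iP1 iP2, vP1, vP2]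
    ring
  have hQlle : (∫ z in a..b, x z ⬝ᵥ ((if z < l then Qm z else Qp z)).mulVec
      (Aop Qm Qp Qm' Qp' xm xp xm' xp' l z)) ≤ 0 := by linarith
  
  have hxmc0 : ContinuousOn (fun ζ => xm ζ 0) (Set.Icc a l) :=
    fun z hz => (hdm0 z hz).continuousWithinAt
  have hxmc1 : ContinuousOn (fun ζ => xm ζ 1) (Set.Icc a l) :=
    fun z hz => (hdm1 z hz).continuousWithinAt
  have hxpc0 : ContinuousOn (fun ζ => xp ζ 0) (Set.Icc l b) :=
    fun z hz => (hdp0 z hz).continuousWithinAt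
  have hxpc1 : ContinuousOn (fun ζ => xp ζ 1) (Set.Icc l b) :=
    fun z hz => (hdp1 z hz).continuousWithinAt
  have hQmc11 : ContinuousOn (fun z => Qm z 1 1) (Set.Icc a b) :=
    fun z hz => (hQmd 1 1 z hz).continuousWithinAt
  have hQpc11 : ContinuousOn (fun z => Qp z 1 1) (Set.Icc a b) :=
    fun z hz => (hQpd 1 1 z hz).continuousWithinAt
  rcases lt_trichotomy l 0 with hl0 | hl0 | hl0
  · -- case l < 0
    have hsubl0 : Set.Icc l (0:ℝ) ⊆ Set.Icc a b := Set.Icc_subset_Icc hal hb.le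
    have hsubl0p : Set.Icc l (0:ℝ) ⊆ Set.Icc l b := Set.Icc_subset_Icc le_rfl hb.le
    have hsub0b : Set.Icc (0:ℝ) b ⊆ Set.Icc a b := Set.Icc_subset_Icc ha.le le_rfl
    have hsub0bp : Set.Icc (0:ℝ) b ⊆ Set.Icc l b := Set.Icc_subset_Icc hl0.le le_rfl
    have hI0 : (0:ℝ) ∈ Set.Icc a b := ⟨ha.le, hb.le⟩
    obtain ⟨iA, vA⟩ := piece (f := fun z => x z ⬝ᵥ ((if z < 0 then Qm z else Qp z)).mulVec
        (Aop Qm Qp Qm' Qp' xm xp xm' xp' l z))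
      (ρ := fun _ => (1:ℝ)) (σ := fun _ => (0:ℝ))
      (q1 := fun ζ => Qm ζ 0 0) (q1' := fun ζ => Qm' ζ 0 0)
      (q2 := fun ζ => Qm ζ 1 1) (q2' := fun ζ => Qm' ζ 1 1)
      (y1 := fun ζ => xm ζ 0) (y1' := fun ζ => xm' ζ 0)
      (y2 := fun ζ => xm ζ 1) (y2' := fun ζ => xm' ζ 1)
      hal (fun z _ => hasDerivWithinAt_const z _ 1) continuousOn_const
      (fun z hz => (hQmd 0 0 z (hsubml hz)).mono hsubml) ((hQm' 0 0).mono hsubml)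
      (fun z hz => (hQmd 1 1 z (hsubml hz)).mono hsubml) ((hQm' 1 1).mono hsubml)
      hdm0 hcm'0 hdm1 hcm'1
      (by
        intro z hz
        have hzl : z < l := hz.2
        have hz0 : z < 0 := hzl.trans hl0
        have hzI : z ∈ Set.Icc a b := ⟨hz.1.le, hz0.le.trans hb.le⟩
        simp only [Aop, hz0, hzl, if_true, hxm z ⟨hz.1.le, hzl⟩]
        rw [integrand_comp (Qm z) (Qm' z) (Qm z) (xm z) (xm z) (xm' z) (hQm01 z hzI)
          (hQm10 z hzI) (hQm'01 z hzI) (hQm'10 z hzI) (hQm01 z hzI) (hQm10 z hzI)]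
        ring)
    obtain ⟨iB, vB⟩ := piece (f := fun z => x z ⬝ᵥ ((if z < 0 then Qm z else Qp z)).mulVec
        (Aop Qm Qp Qm' Qp' xm xp xm' xp' l z))
      (ρ := fun ζ => Qm ζ 0 0 / Qp ζ 0 0)
      (σ := fun ζ => (Qm' ζ 0 0 * Qp ζ 0 0 - Qm ζ 0 0 * Qp' ζ 0 0) / (Qp ζ 0 0)^2)
      (q1 := fun ζ => Qp ζ 0 0) (q1' := fun ζ => Qp' ζ 0 0)
      (q2 := fun ζ => Qp ζ 1 1) (q2' := fun ζ => Qp' ζ 1 1)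
      (y1 := fun ζ => xp ζ 0) (y1' := fun ζ => xp' ζ 0)
      (y2 := fun ζ => xp ζ 1) (y2' := fun ζ => xp' ζ 1)
      hl0.le (fun z hz => (hρ'd z (hsubl0 hz)).mono hsubl0) (hσ'c.mono hsubl0)
      (fun z hz => (hQpd 0 0 z (hsubl0 hz)).mono hsubl0) ((hQp' 0 0).mono hsubl0)
      (fun z hz => (hQpd 1 1 z (hsubl0 hz)).mono hsubl0) ((hQp' 1 1).mono hsubl0)
      (fun z hz => (hdp0 z (hsubl0p hz)).mono hsubl0p) (hcp'0.mono hsubl0p)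
      (fun z hz => (hdp1 z (hsubl0p hz)).mono hsubl0p) (hcp'1.mono hsubl0p)
      (by
        intro z hz
        have hz0 : z < 0 := hz.2
        have hzl : ¬ z < l := not_lt.mpr hz.1.le
        have hzI : z ∈ Set.Icc a b := ⟨hal.trans hz.1.le, hz0.le.trans hb.le⟩
        simp only [Aop, hz0, if_true, hzl, if_false, hxp z ⟨hz.1, hz0.le.trans hb.le⟩]
        rw [integrand_comp (Qm z) (Qp' z) (Qp z) (xp z) (xp z) (xp' z) (hQm01 z hzI)
          (hQm10 z hzI) (hQp'01 z hzI) (hQp'10 z hzI) (hQp01 z hzI) (hQp10 z hzI)]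
        have hcross : Qm z 0 0 * Qp z 1 1 = Qm z 1 1 * Qp z 0 0 := by
          linear_combination
            - (div_eq_div_iff (hQmne z hzI) (hQm11ne z hzI)).mp (hratio z hzI)
        exact ratio_alg (hQpne z hzI) hcross)
    obtain ⟨iC, vC⟩ := piece (f := fun z => x z ⬝ᵥ ((if z < 0 then Qm z else Qp z)).mulVec
        (Aop Qm Qp Qm' Qp' xm xp xm' xp' l z))
      (ρ := fun _ => (1:ℝ)) (σ := fun _ => (0:ℝ))
      (q1 := fun ζ => Qp ζ 0 0) (q1' := fun ζ => Qp' ζ 0 0)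
      (q2 := fun ζ => Qp ζ 1 1) (q2' := fun ζ => Qp' ζ 1 1)
      (y1 := fun ζ => xp ζ 0) (y1' := fun ζ => xp' ζ 0)
      (y2 := fun ζ => xp ζ 1) (y2' := fun ζ => xp' ζ 1)
      hb.le (fun z _ => hasDerivWithinAt_const z _ 1) continuousOn_const
      (fun z hz => (hQpd 0 0 z (hsub0b hz)).mono hsub0b) ((hQp' 0 0).mono hsub0b)
      (fun z hz => (hQpd 1 1 z (hsub0b hz)).mono hsub0b) ((hQp' 1 1).mono hsub0b)
      (fun z hz => (hdp0 z (hsub0bp hz)).mono hsub0bp) (hcp'0.mono hsub0bp)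
      (fun z hz => (hdp1 z (hsub0bp hz)).mono hsub0bp) (hcp'1.mono hsub0bp)
      (by
        intro z hz
        have hz0 : ¬ z < 0 := not_lt.mpr hz.1.le
        have hzl : ¬ z < l := not_lt.mpr (hl0.le.trans hz.1.le)
        have hzI : z ∈ Set.Icc a b := ⟨ha.le.trans hz.1.le, hz.2.le⟩
        simp only [Aop, hz0, hzl, if_false, hxp z ⟨hl0.trans hz.1, hz.2.le⟩]
        rw [integrand_comp (Qp z) (Qp' z) (Qp z) (xp z) (xp z) (xp' z) (hQp01 z hzI)
          (hQp10 z hzI) (hQp'01 z hzI) (hQp'10 z hzI) (hQp01 z hzI) (hQp10 z hzI)]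
        ring)
    simp only [zero_mul, intervalIntegral.integral_zero, one_mul, zero_add] at vA vC
    rw [hum2l, mul_zero, sub_zero] at vA
    have h00 : Qp 0 0 0 = Qm 0 0 0 := (div_eq_one_iff_eq (hQmne 0 hI0)).mp hratio0
    have hρ0 : Qm 0 0 0 / Qp 0 0 0 = 1 := by
      rw [h00]; exact div_self (hQmne 0 hI0)
    rw [hup2l, mul_zero, mul_zero, hρ0, one_mul] at vB
    have hsum : (∫ z in a..b, x z ⬝ᵥ ((if z < 0 then Qm z else Qp z)).mulVec
        (Aop Qm Qp Qm' Qp' xm xp xm' xp' l z)) =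
        ((Qm a 0 0 * xm a 0) * (Qm a 1 1 * xm a 1)
          - (Qp b 0 0 * xp b 0) * (Qp b 1 1 * xp b 1))
        + ∫ z in l..(0:ℝ), (Qm' z 0 0 * Qp z 0 0 - Qm z 0 0 * Qp' z 0 0) / (Qp z 0 0)^2
            * ((Qp z 0 0 * xp z 0) * (Qp z 1 1 * xp z 1)) := by
      rw [← intervalIntegral.integral_add_adjacent_intervals (iA.trans iB) iC,
        ← intervalIntegral.integral_add_adjacent_intervals iA iB, vA, vB, vC]
      ring
    have intA : IntervalIntegrable (fun z => x z ⬝ᵥ ((if z < 0 then Qm z else Qp z)).mulVec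
        (x z)) MeasureTheory.volume a l := by
      refine intervalIntegrable_congr_off (p := l) (g := fun z =>
        Qm z 0 0 * xm z 0 ^ 2 + Qm z 1 1 * xm z 1 ^ 2) ?_ ?_
      · intro z hz hzl
        rw [Set.uIoc_of_le hal] at hz
        have hzlt : z < l := lt_of_le_of_ne hz.2 hzl
        have hzI : z ∈ Set.Icc a b := ⟨hz.1.le, hz.2.trans hlb⟩
        simp only [if_pos (hzlt.trans hl0), hxm z ⟨hz.1.le, hzlt⟩]
        simp only [Matrix.mulVec, dotProduct, Fin.sum_univ_two,
          hQm01 z hzI, hQm10 z hzI]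
        ring
      · exact (((hQmc.mono hsubml).mul (hxmc0.pow 2)).add
          ((hQmc11.mono hsubml).mul (hxmc1.pow 2))).intervalIntegrable_of_Icc hal
    have intB : IntervalIntegrable (fun z => x z ⬝ᵥ ((if z < 0 then Qm z else Qp z)).mulVec
        (x z)) MeasureTheory.volume l 0 := by
      refine intervalIntegrable_congr_off (p := (0:ℝ)) (g := fun z =>
        Qm z 0 0 * xp z 0 ^ 2 + Qm z 1 1 * xp z 1 ^ 2) ?_ ?_
      · intro z hz hz0
        rw [Set.uIoc_of_le hl0.le] at hz
        have hzlt : z < 0 := lt_of_le_of_ne hz.2 hz0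
        have hzI : z ∈ Set.Icc a b := ⟨hal.trans hz.1.le, hz.2.trans hb.le⟩
        simp only [if_pos hzlt, hxp z ⟨hz.1, hz.2.trans hb.le⟩]
        simp only [Matrix.mulVec, dotProduct, Fin.sum_univ_two,
          hQm01 z hzI, hQm10 z hzI]
        ring
      · exact (((hQmc.mono hsubl0).mul ((hxpc0.mono hsubl0p).pow 2)).add
          ((hQmc11.mono hsubl0).mul ((hxpc1.mono hsubl0p).pow 2))).intervalIntegrable_of_Icc
          hl0.le
    have intC : IntervalIntegrable (fun z => x z ⬝ᵥ ((if z < 0 then Qm z else Qp z)).mulVec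
        (x z)) MeasureTheory.volume 0 b := by
      refine intervalIntegrable_congr_off (p := (0:ℝ)) (g := fun z =>
        Qp z 0 0 * xp z 0 ^ 2 + Qp z 1 1 * xp z 1 ^ 2) ?_ ?_
      · intro z hz hz0
        rw [Set.uIoc_of_le hb.le] at hz
        have hzI : z ∈ Set.Icc a b := ⟨ha.le.trans hz.1.le, hz.2⟩
        simp only [if_neg (not_lt.mpr hz.1.le), hxp z ⟨hl0.trans hz.1, hz.2⟩]
        simp only [Matrix.mulVec, dotProduct, Fin.sum_univ_two,
          hQp01 z hzI, hQp10 z hzI]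
        ring
      · exact (((hQpc.mono hsub0b).mul ((hxpc0.mono hsub0bp).pow 2)).add
          ((hQpc11.mono hsub0b).mul ((hxpc1.mono hsub0bp).pow 2))).intervalIntegrable_of_Icc
          hb.le
    have hNsplit : (∫ z in a..b, x z ⬝ᵥ ((if z < 0 then Qm z else Qp z)).mulVec (x z)) =
        (∫ z in a..l, x z ⬝ᵥ ((if z < 0 then Qm z else Qp z)).mulVec (x z))
        + (∫ z in l..(0:ℝ), x z ⬝ᵥ ((if z < 0 then Qm z else Qp z)).mulVec (x z))
        + (∫ z in (0:ℝ)..b, x z ⬝ᵥ ((if z < 0 then Qm z else Qp z)).mulVec (x z)) := by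
      rw [← intervalIntegral.integral_add_adjacent_intervals (intA.trans intB) intC,
        ← intervalIntegral.integral_add_adjacent_intervals intA intB]
    have hNA0 : 0 ≤ ∫ z in a..l, x z ⬝ᵥ ((if z < 0 then Qm z else Qp z)).mulVec (x z) :=
      intervalIntegral.integral_nonneg (μ := MeasureTheory.volume) hal
        (fun u hu => hpos u ⟨hu.1, hu.2.trans hlb⟩)
    have hNC0 : 0 ≤ ∫ z in (0:ℝ)..b, x z ⬝ᵥ ((if z < 0 then Qm z else Qp z)).mulVec (x z) :=
      intervalIntegral.integral_nonneg (μ := MeasureTheory.volume) hb.le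
        (fun u hu => hpos u ⟨ha.le.trans hu.1, hu.2⟩)
    have hmono : ∀ z ∈ Set.Icc l (0:ℝ),
        (Qm' z 0 0 * Qp z 0 0 - Qm z 0 0 * Qp' z 0 0) / (Qp z 0 0)^2
          * ((Qp z 0 0 * xp z 0) * (Qp z 1 1 * xp z 1))
        ≤ ω * (x z ⬝ᵥ ((if z < 0 then Qm z else Qp z)).mulVec (x z)) := by
      intro z hz
      have hzI : z ∈ Set.Icc a b := hsubl0 hz
      rcases eq_or_lt_of_le hz.1 with heq | hzl
      · rw [← heq]
        rw [hup2l, mul_zero, mul_zero]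
        exact mul_nonneg hωpos.le (hpos _ hlI)
      · have hzx : x z = xp z := hxp z ⟨hzl, hz.2.trans hb.le⟩
        have hq := hQpB z hzI
        have hqm := hQmB z hzI
        have hσb := hσB (Qm z 0 0) (Qp z 0 0) (Qm' z 0 0) (Qp' z 0 0)
          hq.1 hq.2.1 hqm.1 hqm.2.1 (hCm' z hzI) (hCp' z hzI)
        have h3 : m * (xp z 0 ^ 2 + xp z 1 ^ 2)
            ≤ x z ⬝ᵥ ((if z < 0 then Qm z else Qp z)).mulVec (x z) := by
          by_cases hz0 : z < 0
          · rw [if_pos hz0, hzx]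
            exact quad_lower (hbound z hzI).1 (xp z)
          · rw [if_neg hz0, hzx]
            exact quad_lower (hbound z hzI).2.2.1 (xp z)
        have e1 : |Qp z 0 0 * xp z 0| ≤ M * |xp z 0| := by
          rw [abs_mul, abs_of_nonneg (by linarith [hq.1] : (0:ℝ) ≤ Qp z 0 0)]
          exact mul_le_mul_of_nonneg_right hq.2.1 (abs_nonneg _)
        have e2 : |Qp z 1 1 * xp z 1| ≤ M * |xp z 1| := by
          rw [abs_mul, abs_of_nonneg (by linarith [hq.2.2.1] : (0:ℝ) ≤ Qp z 1 1)]
          exact mul_le_mul_of_nonneg_right hq.2.2.2 (abs_nonneg _)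
        have e3 : |Qp z 0 0 * xp z 0| * |Qp z 1 1 * xp z 1|
            ≤ (M * |xp z 0|) * (M * |xp z 1|) :=
          mul_le_mul e1 e2 (abs_nonneg _) (by positivity)
        have e4 : |xp z 0| * |xp z 1| ≤ (xp z 0 ^ 2 + xp z 1 ^ 2)/2 := by
          have h := two_mul_le_add_sq (|xp z 0|) (|xp z 1|)
          rw [sq_abs, sq_abs] at h
          linarith
        have hF2 : |(Qp z 0 0 * xp z 0) * (Qp z 1 1 * xp z 1)|
            ≤ M^2 * (xp z 0 ^ 2 + xp z 1 ^ 2)/2 := by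
          rw [abs_mul]
          have e5 : (M * |xp z 0|) * (M * |xp z 1|) = M^2 * (|xp z 0| * |xp z 1|) := by ring
          have e6 : M^2 * (|xp z 0| * |xp z 1|) ≤ M^2 * ((xp z 0 ^ 2 + xp z 1 ^ 2)/2) :=
            mul_le_mul_of_nonneg_left e4 (sq_nonneg M)
          linarith [e3, e5, e6]
        calc (Qm' z 0 0 * Qp z 0 0 - Qm z 0 0 * Qp' z 0 0) / (Qp z 0 0)^2
              * ((Qp z 0 0 * xp z 0) * (Qp z 1 1 * xp z 1))
            ≤ |(Qm' z 0 0 * Qp z 0 0 - Qm z 0 0 * Qp' z 0 0) / (Qp z 0 0)^2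
              * ((Qp z 0 0 * xp z 0) * (Qp z 1 1 * xp z 1))| := le_abs_self _
          _ = |(Qm' z 0 0 * Qp z 0 0 - Qm z 0 0 * Qp' z 0 0) / (Qp z 0 0)^2|
              * |(Qp z 0 0 * xp z 0) * (Qp z 1 1 * xp z 1)| := abs_mul _ _
          _ ≤ K * (M^2 * (xp z 0 ^ 2 + xp z 1 ^ 2)/2) :=
              mul_le_mul hσb hF2 (abs_nonneg _) hKpos.le
          _ = ω * (m * (xp z 0 ^ 2 + xp z 1 ^ 2)) := by
              rw [hω]; field_simp
          _ ≤ ω * (x z ⬝ᵥ ((if z < 0 then Qm z else Qp z)).mulVec (x z)) :=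
              mul_le_mul_of_nonneg_left h3 hωpos.le
    have intσF : IntervalIntegrable (fun z =>
        (Qm' z 0 0 * Qp z 0 0 - Qm z 0 0 * Qp' z 0 0) / (Qp z 0 0)^2
          * ((Qp z 0 0 * xp z 0) * (Qp z 1 1 * xp z 1))) MeasureTheory.volume l 0 :=
      ((hσ'c.mono hsubl0).mul (((hQpc.mono hsubl0).mul (hxpc0.mono hsubl0p)).mul
        ((hQpc11.mono hsubl0).mul (hxpc1.mono hsubl0p)))).intervalIntegrable_of_Icc hl0.le
    have hISF : (∫ z in l..(0:ℝ), (Qm' z 0 0 * Qp z 0 0 - Qm z 0 0 * Qp' z 0 0) / (Qp z 0 0)^2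
          * ((Qp z 0 0 * xp z 0) * (Qp z 1 1 * xp z 1)))
        ≤ ω * ∫ z in a..b, x z ⬝ᵥ ((if z < 0 then Qm z else Qp z)).mulVec (x z) := by
      have h1 := intervalIntegral.integral_mono_on hl0.le intσF (intB.const_mul ω) hmono
      rw [intervalIntegral.integral_const_mul] at h1
      have h2 : (∫ z in l..(0:ℝ), x z ⬝ᵥ ((if z < 0 then Qm z else Qp z)).mulVec (x z))
          ≤ ∫ z in a..b, x z ⬝ᵥ ((if z < 0 then Qm z else Qp z)).mulVec (x z) := by
        rw [hNsplit]; linarith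
      exact h1.trans (mul_le_mul_of_nonneg_left h2 hωpos.le)
    linarith [hsum, hQlle, hISF, hdiss]
  · -- interface at the origin: the two inner products coincide
    subst hl0
    exact hdiss.trans (mul_nonneg hωpos.le hNnonneg)
  · -- case 0 < l
    have hsub0l : Set.Icc (0:ℝ) l ⊆ Set.Icc a b := Set.Icc_subset_Icc ha.le hlb
    have hsub0lm : Set.Icc (0:ℝ) l ⊆ Set.Icc a l := Set.Icc_subset_Icc ha.le le_rfl
    have hsuba0 : Set.Icc a (0:ℝ) ⊆ Set.Icc a b := Set.Icc_subset_Icc le_rfl hb.le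
    have hsuba0m : Set.Icc a (0:ℝ) ⊆ Set.Icc a l := Set.Icc_subset_Icc le_rfl hl0.le
    obtain ⟨iA, vA⟩ := piece (f := fun z => x z ⬝ᵥ ((if z < 0 then Qm z else Qp z)).mulVec
        (Aop Qm Qp Qm' Qp' xm xp xm' xp' l z))
      (ρ := fun _ => (1:ℝ)) (σ := fun _ => (0:ℝ))
      (q1 := fun ζ => Qm ζ 0 0) (q1' := fun ζ => Qm' ζ 0 0)
      (q2 := fun ζ => Qm ζ 1 1) (q2' := fun ζ => Qm' ζ 1 1)
      (y1 := fun ζ => xm ζ 0) (y1' := fun ζ => xm' ζ 0)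
      (y2 := fun ζ => xm ζ 1) (y2' := fun ζ => xm' ζ 1)
      ha.le (fun z _ => hasDerivWithinAt_const z _ 1) continuousOn_const
      (fun z hz => (hQmd 0 0 z (hsuba0 hz)).mono hsuba0) ((hQm' 0 0).mono hsuba0)
      (fun z hz => (hQmd 1 1 z (hsuba0 hz)).mono hsuba0) ((hQm' 1 1).mono hsuba0)
      (fun z hz => (hdm0 z (hsuba0m hz)).mono hsuba0m) (hcm'0.mono hsuba0m)
      (fun z hz => (hdm1 z (hsuba0m hz)).mono hsuba0m) (hcm'1.mono hsuba0m)
      (by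
        intro z hz
        have hz0 : z < 0 := hz.2
        have hzl : z < l := hz0.trans hl0
        have hzI : z ∈ Set.Icc a b := ⟨hz.1.le, hz0.le.trans hb.le⟩
        simp only [Aop, hz0, hzl, if_true, hxm z ⟨hz.1.le, hzl⟩]
        rw [integrand_comp (Qm z) (Qm' z) (Qm z) (xm z) (xm z) (xm' z) (hQm01 z hzI)
          (hQm10 z hzI) (hQm'01 z hzI) (hQm'10 z hzI) (hQm01 z hzI) (hQm10 z hzI)]
        ring)
    obtain ⟨iB, vB⟩ := piece (f := fun z => x z ⬝ᵥ ((if z < 0 then Qm z else Qp z)).mulVec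
        (Aop Qm Qp Qm' Qp' xm xp xm' xp' l z))
      (ρ := fun ζ => Qp ζ 0 0 / Qm ζ 0 0)
      (σ := fun ζ => (Qp' ζ 0 0 * Qm ζ 0 0 - Qp ζ 0 0 * Qm' ζ 0 0) / (Qm ζ 0 0)^2)
      (q1 := fun ζ => Qm ζ 0 0) (q1' := fun ζ => Qm' ζ 0 0)
      (q2 := fun ζ => Qm ζ 1 1) (q2' := fun ζ => Qm' ζ 1 1)
      (y1 := fun ζ => xm ζ 0) (y1' := fun ζ => xm' ζ 0)
      (y2 := fun ζ => xm ζ 1) (y2' := fun ζ => xm' ζ 1)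
      hl0.le (fun z hz => (hρd z (hsub0l hz)).mono hsub0l) (hσc.mono hsub0l)
      (fun z hz => (hQmd 0 0 z (hsub0l hz)).mono hsub0l) ((hQm' 0 0).mono hsub0l)
      (fun z hz => (hQmd 1 1 z (hsub0l hz)).mono hsub0l) ((hQm' 1 1).mono hsub0l)
      (fun z hz => (hdm0 z (hsub0lm hz)).mono hsub0lm) (hcm'0.mono hsub0lm)
      (fun z hz => (hdm1 z (hsub0lm hz)).mono hsub0lm) (hcm'1.mono hsub0lm)
      (by
        intro z hz
        have hz0 : ¬ z < 0 := not_lt.mpr hz.1.le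
        have hzl : z < l := hz.2
        have hzI : z ∈ Set.Icc a b := ⟨ha.le.trans hz.1.le, hzl.le.trans hlb⟩
        simp only [Aop, hz0, if_false, hzl, if_true, hxm z ⟨ha.le.trans hz.1.le, hzl⟩]
        rw [integrand_comp (Qp z) (Qm' z) (Qm z) (xm z) (xm z) (xm' z) (hQp01 z hzI)
          (hQp10 z hzI) (hQm'01 z hzI) (hQm'10 z hzI) (hQm01 z hzI) (hQm10 z hzI)]
        exact ratio_alg (hQmne z hzI)
          ((div_eq_div_iff (hQmne z hzI) (hQm11ne z hzI)).mp (hratio z hzI)))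
    obtain ⟨iC, vC⟩ := piece (f := fun z => x z ⬝ᵥ ((if z < 0 then Qm z else Qp z)).mulVec
        (Aop Qm Qp Qm' Qp' xm xp xm' xp' l z))
      (ρ := fun _ => (1:ℝ)) (σ := fun _ => (0:ℝ))
      (q1 := fun ζ => Qp ζ 0 0) (q1' := fun ζ => Qp' ζ 0 0)
      (q2 := fun ζ => Qp ζ 1 1) (q2' := fun ζ => Qp' ζ 1 1)
      (y1 := fun ζ => xp ζ 0) (y1' := fun ζ => xp' ζ 0)
      (y2 := fun ζ => xp ζ 1) (y2' := fun ζ => xp' ζ 1)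
      hlb (fun z _ => hasDerivWithinAt_const z _ 1) continuousOn_const
      (fun z hz => (hQpd 0 0 z (hsubpl hz)).mono hsubpl) ((hQp' 0 0).mono hsubpl)
      (fun z hz => (hQpd 1 1 z (hsubpl hz)).mono hsubpl) ((hQp' 1 1).mono hsubpl)
      hdp0 hcp'0 hdp1 hcp'1
      (by
        intro z hz
        have hz0 : ¬ z < 0 := not_lt.mpr (hl0.le.trans hz.1.le)
        have hzl : ¬ z < l := not_lt.mpr hz.1.le
        have hzI : z ∈ Set.Icc a b := ⟨hal.trans hz.1.le, hz.2.le⟩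
        simp only [Aop, hz0, hzl, if_false, hxp z ⟨hz.1, hz.2.le⟩]
        rw [integrand_comp (Qp z) (Qp' z) (Qp z) (xp z) (xp z) (xp' z) (hQp01 z hzI)
          (hQp10 z hzI) (hQp'01 z hzI) (hQp'10 z hzI) (hQp01 z hzI) (hQp10 z hzI)]
        ring)
    simp only [zero_mul, intervalIntegral.integral_zero, one_mul, zero_add] at vA vC
    rw [hum2l, mul_zero, mul_zero, sub_zero] at vB
    rw [hratio0, one_mul] at vB
    rw [hup2l, mul_zero, zero_sub] at vC
    have hsum : (∫ z in a..b, x z ⬝ᵥ ((if z < 0 then Qm z else Qp z)).mulVec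
        (Aop Qm Qp Qm' Qp' xm xp xm' xp' l z)) =
        ((Qm a 0 0 * xm a 0) * (Qm a 1 1 * xm a 1)
          - (Qp b 0 0 * xp b 0) * (Qp b 1 1 * xp b 1))
        + ∫ z in (0:ℝ)..l, (Qp' z 0 0 * Qm z 0 0 - Qp z 0 0 * Qm' z 0 0) / (Qm z 0 0)^2
            * ((Qm z 0 0 * xm z 0) * (Qm z 1 1 * xm z 1)) := by
      rw [← intervalIntegral.integral_add_adjacent_intervals (iA.trans iB) iC,
        ← intervalIntegral.integral_add_adjacent_intervals iA iB, vA, vB, vC]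
      ring
    have intA : IntervalIntegrable (fun z => x z ⬝ᵥ ((if z < 0 then Qm z else Qp z)).mulVec
        (x z)) MeasureTheory.volume a 0 := by
      refine intervalIntegrable_congr_off (p := (0:ℝ)) (g := fun z =>
        Qm z 0 0 * xm z 0 ^ 2 + Qm z 1 1 * xm z 1 ^ 2) ?_ ?_
      · intro z hz hz0
        rw [Set.uIoc_of_le ha.le] at hz
        have hzlt : z < 0 := lt_of_le_of_ne hz.2 hz0
        have hzI : z ∈ Set.Icc a b := ⟨hz.1.le, hzlt.le.trans hb.le⟩
        simp only [if_pos hzlt, hxm z ⟨hz.1.le, hzlt.trans hl0⟩]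
        simp only [Matrix.mulVec, dotProduct, Fin.sum_univ_two,
          hQm01 z hzI, hQm10 z hzI]
        ring
      · exact (((hQmc.mono hsuba0).mul ((hxmc0.mono hsuba0m).pow 2)).add
          ((hQmc11.mono hsuba0).mul ((hxmc1.mono hsuba0m).pow 2))).intervalIntegrable_of_Icc
          ha.le
    have intB : IntervalIntegrable (fun z => x z ⬝ᵥ ((if z < 0 then Qm z else Qp z)).mulVec
        (x z)) MeasureTheory.volume 0 l := by
      refine intervalIntegrable_congr_off (p := l) (g := fun z =>
        Qp z 0 0 * xm z 0 ^ 2 + Qp z 1 1 * xm z 1 ^ 2) ?_ ?_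
      · intro z hz hzl
        rw [Set.uIoc_of_le hl0.le] at hz
        have hzlt : z < l := lt_of_le_of_ne hz.2 hzl
        have hzI : z ∈ Set.Icc a b := ⟨ha.le.trans hz.1.le, hz.2.trans hlb⟩
        simp only [if_neg (not_lt.mpr hz.1.le), hxm z ⟨ha.le.trans hz.1.le, hzlt⟩]
        simp only [Matrix.mulVec, dotProduct, Fin.sum_univ_two,
          hQp01 z hzI, hQp10 z hzI]
        ring
      · exact (((hQpc.mono hsub0l).mul ((hxmc0.mono hsub0lm).pow 2)).add
          ((hQpc11.mono hsub0l).mul ((hxmc1.mono hsub0lm).pow 2))).intervalIntegrable_of_Icc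
          hl0.le
    have intC : IntervalIntegrable (fun z => x z ⬝ᵥ ((if z < 0 then Qm z else Qp z)).mulVec
        (x z)) MeasureTheory.volume l b := by
      refine intervalIntegrable_congr_off (p := l) (g := fun z =>
        Qp z 0 0 * xp z 0 ^ 2 + Qp z 1 1 * xp z 1 ^ 2) ?_ ?_
      · intro z hz hzl
        rw [Set.uIoc_of_le hlb] at hz
        have hzI : z ∈ Set.Icc a b := ⟨hal.trans hz.1.le, hz.2⟩
        simp only [if_neg (not_lt.mpr (hl0.le.trans hz.1.le)), hxp z ⟨hz.1, hz.2⟩]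
        simp only [Matrix.mulVec, dotProduct, Fin.sum_univ_two,
          hQp01 z hzI, hQp10 z hzI]
        ring
      · exact (((hQpc.mono hsubpl).mul (hxpc0.pow 2)).add
          ((hQpc11.mono hsubpl).mul (hxpc1.pow 2))).intervalIntegrable_of_Icc hlb
    have hNsplit : (∫ z in a..b, x z ⬝ᵥ ((if z < 0 then Qm z else Qp z)).mulVec (x z)) =
        (∫ z in a..(0:ℝ), x z ⬝ᵥ ((if z < 0 then Qm z else Qp z)).mulVec (x z))
        + (∫ z in (0:ℝ)..l, x z ⬝ᵥ ((if z < 0 then Qm z else Qp z)).mulVec (x z))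
        + (∫ z in l..b, x z ⬝ᵥ ((if z < 0 then Qm z else Qp z)).mulVec (x z)) := by
      rw [← intervalIntegral.integral_add_adjacent_intervals (intA.trans intB) intC,
        ← intervalIntegral.integral_add_adjacent_intervals intA intB]
    have hNA0 : 0 ≤ ∫ z in a..(0:ℝ), x z ⬝ᵥ ((if z < 0 then Qm z else Qp z)).mulVec (x z) :=
      intervalIntegral.integral_nonneg (μ := MeasureTheory.volume) ha.le
        (fun u hu => hpos u ⟨hu.1, hu.2.trans hb.le⟩)
    have hNC0 : 0 ≤ ∫ z in l..b, x z ⬝ᵥ ((if z < 0 then Qm z else Qp z)).mulVec (x z) :=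
      intervalIntegral.integral_nonneg (μ := MeasureTheory.volume) hlb
        (fun u hu => hpos u ⟨hal.trans hu.1, hu.2⟩)
    have hmono : ∀ z ∈ Set.Icc (0:ℝ) l,
        (Qp' z 0 0 * Qm z 0 0 - Qp z 0 0 * Qm' z 0 0) / (Qm z 0 0)^2
          * ((Qm z 0 0 * xm z 0) * (Qm z 1 1 * xm z 1))
        ≤ ω * (x z ⬝ᵥ ((if z < 0 then Qm z else Qp z)).mulVec (x z)) := by
      intro z hz
      have hzI : z ∈ Set.Icc a b := hsub0l hz
      rcases eq_or_lt_of_le hz.2 with heq | hzl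
      · subst heq
        rw [hum2l, mul_zero, mul_zero]
        exact mul_nonneg hωpos.le (hpos _ hzI)
      · have hzx : x z = xm z := hxm z ⟨ha.le.trans hz.1, hzl⟩
        have hq := hQmB z hzI
        have hqp := hQpB z hzI
        have hσb := hσB (Qp z 0 0) (Qm z 0 0) (Qp' z 0 0) (Qm' z 0 0)
          hq.1 hq.2.1 hqp.1 hqp.2.1 (hCp' z hzI) (hCm' z hzI)
        have h3 : m * (xm z 0 ^ 2 + xm z 1 ^ 2)
            ≤ x z ⬝ᵥ ((if z < 0 then Qm z else Qp z)).mulVec (x z) := by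
          rw [if_neg (not_lt.mpr hz.1), hzx]
          exact quad_lower (hbound z hzI).2.2.1 (xm z)
        have e1 : |Qm z 0 0 * xm z 0| ≤ M * |xm z 0| := by
          rw [abs_mul, abs_of_nonneg (by linarith [hq.1] : (0:ℝ) ≤ Qm z 0 0)]
          exact mul_le_mul_of_nonneg_right hq.2.1 (abs_nonneg _)
        have e2 : |Qm z 1 1 * xm z 1| ≤ M * |xm z 1| := by
          rw [abs_mul, abs_of_nonneg (by linarith [hq.2.2.1] : (0:ℝ) ≤ Qm z 1 1)]
          exact mul_le_mul_of_nonneg_right hq.2.2.2 (abs_nonneg _)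
        have e3 : |Qm z 0 0 * xm z 0| * |Qm z 1 1 * xm z 1|
            ≤ (M * |xm z 0|) * (M * |xm z 1|) :=
          mul_le_mul e1 e2 (abs_nonneg _) (by positivity)
        have e4 : |xm z 0| * |xm z 1| ≤ (xm z 0 ^ 2 + xm z 1 ^ 2)/2 := by
          have h := two_mul_le_add_sq (|xm z 0|) (|xm z 1|)
          rw [sq_abs, sq_abs] at h
          linarith
        have hF2 : |(Qm z 0 0 * xm z 0) * (Qm z 1 1 * xm z 1)|
            ≤ M^2 * (xm z 0 ^ 2 + xm z 1 ^ 2)/2 := by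
          rw [abs_mul]
          have e5 : (M * |xm z 0|) * (M * |xm z 1|) = M^2 * (|xm z 0| * |xm z 1|) := by ring
          have e6 : M^2 * (|xm z 0| * |xm z 1|) ≤ M^2 * ((xm z 0 ^ 2 + xm z 1 ^ 2)/2) :=
            mul_le_mul_of_nonneg_left e4 (sq_nonneg M)
          linarith [e3, e5, e6]
        calc (Qp' z 0 0 * Qm z 0 0 - Qp z 0 0 * Qm' z 0 0) / (Qm z 0 0)^2
              * ((Qm z 0 0 * xm z 0) * (Qm z 1 1 * xm z 1))
            ≤ |(Qp' z 0 0 * Qm z 0 0 - Qp z 0 0 * Qm' z 0 0) / (Qm z 0 0)^2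
              * ((Qm z 0 0 * xm z 0) * (Qm z 1 1 * xm z 1))| := le_abs_self _
          _ = |(Qp' z 0 0 * Qm z 0 0 - Qp z 0 0 * Qm' z 0 0) / (Qm z 0 0)^2|
              * |(Qm z 0 0 * xm z 0) * (Qm z 1 1 * xm z 1)| := abs_mul _ _
          _ ≤ K * (M^2 * (xm z 0 ^ 2 + xm z 1 ^ 2)/2) :=
              mul_le_mul hσb hF2 (abs_nonneg _) hKpos.le
          _ = ω * (m * (xm z 0 ^ 2 + xm z 1 ^ 2)) := by
              rw [hω]; field_simp
          _ ≤ ω * (x z ⬝ᵥ ((if z < 0 then Qm z else Qp z)).mulVec (x z)) :=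
              mul_le_mul_of_nonneg_left h3 hωpos.le
    have intσF : IntervalIntegrable (fun z =>
        (Qp' z 0 0 * Qm z 0 0 - Qp z 0 0 * Qm' z 0 0) / (Qm z 0 0)^2
          * ((Qm z 0 0 * xm z 0) * (Qm z 1 1 * xm z 1))) MeasureTheory.volume 0 l :=
      ((hσc.mono hsub0l).mul (((hQmc.mono hsub0l).mul (hxmc0.mono hsub0lm)).mul
        ((hQmc11.mono hsub0l).mul (hxmc1.mono hsub0lm)))).intervalIntegrable_of_Icc hl0.le
    have hISF : (∫ z in (0:ℝ)..l, (Qp' z 0 0 * Qm z 0 0 - Qp z 0 0 * Qm' z 0 0) / (Qm z 0 0)^2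
          * ((Qm z 0 0 * xm z 0) * (Qm z 1 1 * xm z 1)))
        ≤ ω * ∫ z in a..b, x z ⬝ᵥ ((if z < 0 then Qm z else Qp z)).mulVec (x z) := by
      have h1 := intervalIntegral.integral_mono_on hl0.le intσF (intB.const_mul ω) hmono
      rw [intervalIntegral.integral_const_mul] at h1
      have h2 : (∫ z in (0:ℝ)..l, x z ⬝ᵥ ((if z < 0 then Qm z else Qp z)).mulVec (x z))
          ≤ ∫ z in a..b, x z ⬝ᵥ ((if z < 0 then Qm z else Qp z)).mulVec (x z) := by
        rw [hNsplit]; linarith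
      exact h1.trans (mul_le_mul_of_nonneg_left h2 hωpos.le)
    linarith [hsum, hQlle, hISF, hdiss]
end
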